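/- arXiv:0808.0180 — 3 statements merged into one kernel-verified Lean document; each statement's English description precedes it below -/
import Mathlib

section
/- Let n be a positive integer and define Φ_n(x) := (1/(2n³)) · Σ_{ν ∈ Λ_n^†} e_ν(x). Then for every function f : ℝ³ → ℂ and every j ∈ X_n, Σ_{k ∈ X_n} f(k/(2n)) · Φ_n(j/(2n) − k/(2n)) = f(j/(2n)); that is, I_n f(x) := Σ_{k ∈ X_n} f(k/(2n)) Φ_n(x − k/(2n)) interpolates f at every point k/(2n) with k ∈ X_n. -/
open MeasureTheory Complex

attribute [local instance] Classical.propDecidable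

/-- The exponential e_k(x) = exp(2 pi i (k1 x1 + k2 x2 + k3 x3)). -/
noncomputable def e3 (k : ℤ × ℤ × ℤ) (x : ℝ × ℝ × ℝ) : ℂ :=
  Complex.exp (2 * Real.pi * Complex.I *
    ((k.1 : ℂ) * x.1 + (k.2.1 : ℂ) * x.2.1 + (k.2.2 : ℂ) * x.2.2))

/-- The point k/(2n) in three-space. -/
noncomputable def pt3 (n : ℕ) (k : ℤ × ℤ × ℤ) : ℝ × ℝ × ℝ :=
  ((k.1 : ℝ) / (2 * n), (k.2.1 : ℝ) / (2 * n), (k.2.2 : ℝ) / (2 * n))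

/-- The cube of integer points with coordinates in [-m, m]. -/
noncomputable def box3 (m : ℕ) : Finset (ℤ × ℤ × ℤ) :=
  Finset.Icc (-(m : ℤ), -(m : ℤ), -(m : ℤ)) ((m : ℤ), (m : ℤ), (m : ℤ))

/-- Λ_n^† = {k : -n ≤ k_ν ± k_μ < n for all ν < μ}. -/
noncomputable def LamDag (n : ℕ) : Finset (ℤ × ℤ × ℤ) :=
  (box3 n).filter fun k =>
    (-(n : ℤ) ≤ k.1 + k.2.1 ∧ k.1 + k.2.1 < (n : ℤ)) ∧
    (-(n : ℤ) ≤ k.1 - k.2.1 ∧ k.1 - k.2.1 < (n : ℤ)) ∧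
    (-(n : ℤ) ≤ k.1 + k.2.2 ∧ k.1 + k.2.2 < (n : ℤ)) ∧
    (-(n : ℤ) ≤ k.1 - k.2.2 ∧ k.1 - k.2.2 < (n : ℤ)) ∧
    (-(n : ℤ) ≤ k.2.1 + k.2.2 ∧ k.2.1 + k.2.2 < (n : ℤ)) ∧
    (-(n : ℤ) ≤ k.2.1 - k.2.2 ∧ k.2.1 - k.2.2 < (n : ℤ))

/-- X_n = {k : k1 ≡ k2 ≡ k3 (mod 2), -n ≤ k_i < n}. -/
noncomputable def X3 (n : ℕ) : Finset (ℤ × ℤ × ℤ) :=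
  (box3 n).filter fun k =>
    k.1 % 2 = k.2.1 % 2 ∧ k.2.1 % 2 = k.2.2 % 2 ∧
    k.1 < (n : ℤ) ∧ k.2.1 < (n : ℤ) ∧ k.2.2 < (n : ℤ)

/-- Φ_n(x) = (1/(2n³)) Σ_{ν ∈ Λ_n^†} e_ν(x). -/
noncomputable def Phi3 (n : ℕ) (x : ℝ × ℝ × ℝ) : ℂ :=
  (1 / (2 * (n : ℂ) ^ 3)) * ∑ ν ∈ LamDag n, e3 ν x

namespace TrigAux3D

lemma mem_LamDag (n : ℕ) (v : ℤ × ℤ × ℤ) :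
    v ∈ LamDag n ↔
      (-(n : ℤ) ≤ v.1 + v.2.1 ∧ v.1 + v.2.1 < (n : ℤ)) ∧
      (-(n : ℤ) ≤ v.1 - v.2.1 ∧ v.1 - v.2.1 < (n : ℤ)) ∧
      (-(n : ℤ) ≤ v.1 + v.2.2 ∧ v.1 + v.2.2 < (n : ℤ)) ∧
      (-(n : ℤ) ≤ v.1 - v.2.2 ∧ v.1 - v.2.2 < (n : ℤ)) ∧
      (-(n : ℤ) ≤ v.2.1 + v.2.2 ∧ v.2.1 + v.2.2 < (n : ℤ)) ∧
      (-(n : ℤ) ≤ v.2.1 - v.2.2 ∧ v.2.1 - v.2.2 < (n : ℤ)) := by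
  obtain ⟨a, b, c⟩ := v
  constructor
  · intro h
    exact (Finset.mem_filter.mp h).2
  · intro h
    refine Finset.mem_filter.mpr ⟨?_, h⟩
    simp only [box3, Finset.mem_Icc, Prod.mk_le_mk]
    dsimp at h ⊢
    omega

lemma mem_X3 (n : ℕ) (v : ℤ × ℤ × ℤ) :
    v ∈ X3 n ↔
      (v.1 % 2 = v.2.1 % 2 ∧ v.2.1 % 2 = v.2.2 % 2) ∧
      (-(n : ℤ) ≤ v.1 ∧ v.1 < n) ∧ (-(n : ℤ) ≤ v.2.1 ∧ v.2.1 < n) ∧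
      (-(n : ℤ) ≤ v.2.2 ∧ v.2.2 < n) := by
  obtain ⟨a, b, c⟩ := v
  simp only [X3, Finset.mem_filter, box3, Finset.mem_Icc, Prod.mk_le_mk]
  constructor
  · rintro ⟨⟨h1, h2⟩, h3⟩
    exact ⟨⟨h3.1, h3.2.1⟩, ⟨h1.1, h3.2.2.1⟩, ⟨h1.2.1, h3.2.2.2.1⟩, ⟨h1.2.2, h3.2.2.2.2⟩⟩
  · rintro ⟨h1, h2, h3, h4⟩
    exact ⟨⟨⟨h2.1, h3.1, h4.1⟩, by omega⟩, h1.1, h1.2, h2.2, h3.2, h4.2⟩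

def Cl (n : ℕ) (w v : ℤ × ℤ × ℤ) : Prop :=
  (n : ℤ) ∣ v.1 - w.1 ∧ (n : ℤ) ∣ v.2.1 - w.2.1 ∧
    (2 * n : ℤ) ∣ (v.1 + v.2.1 + v.2.2) - (w.1 + w.2.1 + w.2.2)

def Qf (v : ℤ × ℤ × ℤ) : ℤ := v.1 ^ 2 + v.2.1 ^ 2 + v.2.2 ^ 2

def Sf (v : ℤ × ℤ × ℤ) : ℤ := v.1 + v.2.1 + v.2.2

noncomputable def Df (v : ℤ × ℤ × ℤ) : ℕ :=
  (if v.2.1 < v.1 then 1 else 0) + (if v.2.2 < v.1 then 1 else 0) +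
    (if v.2.2 < v.2.1 then 1 else 0)

lemma exists_min {α : Type*} {A : Set α} (hA : A.Nonempty) (f : α → ℕ) :
    ∃ a ∈ A, ∀ b ∈ A, f a ≤ f b := by
  have hne : (f '' A).Nonempty := hA.image f
  obtain ⟨a, ha, hfa⟩ := Nat.sInf_mem hne
  exact ⟨a, ha, fun b hb => hfa ▸ Nat.sInf_le ⟨b, hb, rfl⟩⟩

lemma Qf_nonneg (v : ℤ × ℤ × ℤ) : 0 ≤ Qf v := by
  obtain ⟨a, b, c⟩ := v; simp only [Qf]; positivity

lemma SQ_nonneg (v : ℤ × ℤ × ℤ) : 0 ≤ Sf v + Qf v + 3 := by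
  obtain ⟨a, b, c⟩ := v
  simp only [Sf, Qf]
  nlinarith [sq_nonneg (a + 1), sq_nonneg (b + 1), sq_nonneg (c + 1)]

lemma Cl_move {n : ℕ} {w v v' : ℤ × ℤ × ℤ} (h : Cl n w v)
    (e1 : ∃ t : ℤ, v'.1 - v.1 = n * t) (e2 : ∃ t : ℤ, v'.2.1 - v.2.1 = n * t)
    (e3 : ∃ t : ℤ, (v'.1 + v'.2.1 + v'.2.2) - (v.1 + v.2.1 + v.2.2) = 2 * n * t) :
    Cl n w v' := by
  obtain ⟨h1, h2, h3⟩ := h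
  obtain ⟨t1, ht1⟩ := e1
  obtain ⟨t2, ht2⟩ := e2
  obtain ⟨t3, ht3⟩ := e3
  obtain ⟨s1, hs1⟩ := h1
  obtain ⟨s2, hs2⟩ := h2
  obtain ⟨s3, hs3⟩ := h3
  exact ⟨⟨s1 + t1, by linarith⟩, ⟨s2 + t2, by linarith⟩, ⟨s3 + t3, by linarith⟩⟩

lemma exists_rep (n : ℕ) (hn : 0 < n) (w : ℤ × ℤ × ℤ) :
    ∃ v ∈ LamDag n, Cl n w v := by
  have hn' : (0:ℤ) < n := by exact_mod_cast hn
  set A0 : Set (ℤ × ℤ × ℤ) := {v | Cl n w v} with hA0def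
  have hA0 : A0.Nonempty := ⟨w, by simp [A0, Cl]⟩
  obtain ⟨v0, hv0, hQ0⟩ := exists_min hA0 fun v => (Qf v).toNat
  have hQmin : ∀ u ∈ A0, Qf v0 ≤ Qf u := by
    intro u hu
    have h := hQ0 u hu
    have h1 := Qf_nonneg v0
    have h2 := Qf_nonneg u
    omega
  set A1 : Set (ℤ × ℤ × ℤ) := {u | u ∈ A0 ∧ Qf u = Qf v0} with hA1def
  have hA1 : A1.Nonempty := ⟨v0, hv0, rfl⟩
  obtain ⟨v1, hv1, hS1⟩ := exists_min hA1 fun u => (Sf u + Qf v0 + 3).toNat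
  have hSmin : ∀ u ∈ A1, Sf v1 ≤ Sf u := by
    intro u hu
    have h := hS1 u hu
    have h1 := SQ_nonneg v1
    have h2 := SQ_nonneg u
    have e1 : Qf v1 = Qf v0 := hv1.2
    have e2 : Qf u = Qf v0 := hu.2
    omega
  set A2 : Set (ℤ × ℤ × ℤ) := {u | u ∈ A1 ∧ Sf u = Sf v1} with hA2def
  have hA2 : A2.Nonempty := ⟨v1, hv1, rfl⟩
  obtain ⟨v2, hv2, hD2⟩ := exists_min hA2 Df
  have hv2A1 : v2 ∈ A1 := hv2.1
  have hv2A0 : v2 ∈ A0 := hv2A1.1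
  have hQ2 : Qf v2 = Qf v0 := hv2A1.2
  have hS2 : Sf v2 = Sf v1 := hv2.2
  have mQ : ∀ u ∈ A0, Qf v2 ≤ Qf u := fun u hu => hQ2 ▸ hQmin u hu
  have mS : ∀ u, u ∈ A0 → Qf u = Qf v2 → Sf v2 ≤ Sf u := by
    intro u hu he
    exact hS2 ▸ hSmin u ⟨hu, by rw [he, hQ2]⟩
  have mD : ∀ u, u ∈ A0 → Qf u = Qf v2 → Sf u = Sf v2 → Df v2 ≤ Df u := by
    intro u hu he hs
    exact hD2 u ⟨⟨hu, by rw [he, hQ2]⟩, by rw [hs, hS2]⟩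
  clear hQ0 hS1 hD2 hQmin hSmin hv1 hv2 hv2A1 hA1 hA2 hA1def hA2def hQ2 hS2
  obtain ⟨a, b, c⟩ := v2
  refine ⟨(a, b, c), (mem_LamDag n (a, b, c)).mpr ?_, hv2A0⟩
  simp only [Cl, Qf, Sf, Df] at hv2A0 mQ mS mD ⊢
  refine ⟨⟨?_, ?_⟩, ⟨?_, ?_⟩, ⟨?_, ?_⟩, ⟨?_, ?_⟩, ⟨?_, ?_⟩, ⟨?_, ?_⟩⟩
  · by_contra hviol
    push_neg at hviol
    have hcl' : (a + n, b + n, c) ∈ A0 :=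
      Cl_move hv2A0 ⟨1, by ring⟩ ⟨1, by ring⟩ ⟨1, by ring⟩
    have hq := mQ _ hcl'
    simp only [Qf] at hq
    nlinarith [mul_pos hn' (show (0:ℤ) < -(a + b + n) by linarith)]
  · by_contra hviol
    push_neg at hviol
    have hcl' : (a - n, b - n, c) ∈ A0 :=
      Cl_move hv2A0 ⟨-1, by ring⟩ ⟨-1, by ring⟩ ⟨-1, by ring⟩
    rcases lt_or_eq_of_le hviol with hgt | heq
    · have hq := mQ _ hcl'
      simp only [Qf] at hq
      nlinarith [mul_pos hn' (show (0:ℤ) < a + b - n by linarith)]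
    · have hqe : Qf (a - n, b - n, c) = a ^ 2 + b ^ 2 + c ^ 2 := by
        simp only [Qf]; linear_combination (2 * (n:ℤ)) * heq
      have hs := mS _ hcl' hqe
      simp only [Sf] at hs
      linarith
  · by_contra hviol
    push_neg at hviol
    have hcl' : (a + n, b - n, c) ∈ A0 :=
      Cl_move hv2A0 ⟨1, by ring⟩ ⟨-1, by ring⟩ ⟨0, by ring⟩
    have hq := mQ _ hcl'
    simp only [Qf] at hq
    nlinarith [mul_pos hn' (show (0:ℤ) < -(a - b + n) by linarith)]
  · by_contra hviol
    push_neg at hviol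
    have hcl' : (a - n, b + n, c) ∈ A0 :=
      Cl_move hv2A0 ⟨-1, by ring⟩ ⟨1, by ring⟩ ⟨0, by ring⟩
    rcases lt_or_eq_of_le hviol with hgt | heq
    · have hq := mQ _ hcl'
      simp only [Qf] at hq
      nlinarith [mul_pos hn' (show (0:ℤ) < a - b - n by linarith)]
    · have hab : a = b + n := by linarith
      have hqe : Qf (a - n, b + n, c) = a ^ 2 + b ^ 2 + c ^ 2 := by
        simp only [Qf]; linear_combination (2 * (n:ℤ)) * heq
      have hse : Sf (a - n, b + n, c) = a + b + c := by simp only [Sf]; ring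
      have hd := mD _ hcl' hqe hse
      simp only [Df] at hd
      have hba : b < a := by omega
      split_ifs at hd <;> omega
  · by_contra hviol
    push_neg at hviol
    have hcl' : (a + n, b, c + n) ∈ A0 :=
      Cl_move hv2A0 ⟨1, by ring⟩ ⟨0, by ring⟩ ⟨1, by ring⟩
    have hq := mQ _ hcl'
    simp only [Qf] at hq
    nlinarith [mul_pos hn' (show (0:ℤ) < -(a + c + n) by linarith)]
  · by_contra hviol
    push_neg at hviol
    have hcl' : (a - n, b, c - n) ∈ A0 :=
      Cl_move hv2A0 ⟨-1, by ring⟩ ⟨0, by ring⟩ ⟨-1, by ring⟩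
    rcases lt_or_eq_of_le hviol with hgt | heq
    · have hq := mQ _ hcl'
      simp only [Qf] at hq
      nlinarith [mul_pos hn' (show (0:ℤ) < a + c - n by linarith)]
    · have hqe : Qf (a - n, b, c - n) = a ^ 2 + b ^ 2 + c ^ 2 := by
        simp only [Qf]; linear_combination (2 * (n:ℤ)) * heq
      have hs := mS _ hcl' hqe
      simp only [Sf] at hs
      linarith
  · by_contra hviol
    push_neg at hviol
    have hcl' : (a + n, b, c - n) ∈ A0 :=
      Cl_move hv2A0 ⟨1, by ring⟩ ⟨0, by ring⟩ ⟨0, by ring⟩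
    have hq := mQ _ hcl'
    simp only [Qf] at hq
    nlinarith [mul_pos hn' (show (0:ℤ) < -(a - c + n) by linarith)]
  · by_contra hviol
    push_neg at hviol
    have hcl' : (a - n, b, c + n) ∈ A0 :=
      Cl_move hv2A0 ⟨-1, by ring⟩ ⟨0, by ring⟩ ⟨0, by ring⟩
    rcases lt_or_eq_of_le hviol with hgt | heq
    · have hq := mQ _ hcl'
      simp only [Qf] at hq
      nlinarith [mul_pos hn' (show (0:ℤ) < a - c - n by linarith)]
    · have hac : a = c + n := by linarith
      have hqe : Qf (a - n, b, c + n) = a ^ 2 + b ^ 2 + c ^ 2 := by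
        simp only [Qf]; linear_combination (2 * (n:ℤ)) * heq
      have hse : Sf (a - n, b, c + n) = a + b + c := by simp only [Sf]; ring
      have hd := mD _ hcl' hqe hse
      simp only [Df] at hd
      have hca : c < a := by omega
      split_ifs at hd <;> omega
  · by_contra hviol
    push_neg at hviol
    have hcl' : (a, b + n, c + n) ∈ A0 :=
      Cl_move hv2A0 ⟨0, by ring⟩ ⟨1, by ring⟩ ⟨1, by ring⟩
    have hq := mQ _ hcl'
    simp only [Qf] at hq
    nlinarith [mul_pos hn' (show (0:ℤ) < -(b + c + n) by linarith)]
  · by_contra hviol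
    push_neg at hviol
    have hcl' : (a, b - n, c - n) ∈ A0 :=
      Cl_move hv2A0 ⟨0, by ring⟩ ⟨-1, by ring⟩ ⟨-1, by ring⟩
    rcases lt_or_eq_of_le hviol with hgt | heq
    · have hq := mQ _ hcl'
      simp only [Qf] at hq
      nlinarith [mul_pos hn' (show (0:ℤ) < b + c - n by linarith)]
    · have hqe : Qf (a, b - n, c - n) = a ^ 2 + b ^ 2 + c ^ 2 := by
        simp only [Qf]; linear_combination (2 * (n:ℤ)) * heq
      have hs := mS _ hcl' hqe
      simp only [Sf] at hs
      linarith
  · by_contra hviol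
    push_neg at hviol
    have hcl' : (a, b + n, c - n) ∈ A0 :=
      Cl_move hv2A0 ⟨0, by ring⟩ ⟨1, by ring⟩ ⟨0, by ring⟩
    have hq := mQ _ hcl'
    simp only [Qf] at hq
    nlinarith [mul_pos hn' (show (0:ℤ) < -(b - c + n) by linarith)]
  · by_contra hviol
    push_neg at hviol
    have hcl' : (a, b - n, c + n) ∈ A0 :=
      Cl_move hv2A0 ⟨0, by ring⟩ ⟨-1, by ring⟩ ⟨0, by ring⟩
    rcases lt_or_eq_of_le hviol with hgt | heq
    · have hq := mQ _ hcl'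
      simp only [Qf] at hq
      nlinarith [mul_pos hn' (show (0:ℤ) < b - c - n by linarith)]
    · have hbc : b = c + n := by linarith
      have hqe : Qf (a, b - n, c + n) = a ^ 2 + b ^ 2 + c ^ 2 := by
        simp only [Qf]; linear_combination (2 * (n:ℤ)) * heq
      have hse : Sf (a, b - n, c + n) = a + b + c := by simp only [Sf]; ring
      have hd := mD _ hcl' hqe hse
      simp only [Df] at hd
      have hcb : c < b := by omega
      split_ifs at hd <;> omega

lemma rep_unique (n : ℕ) (hn : 0 < n) {v v' : ℤ × ℤ × ℤ}
    (hv : v ∈ LamDag n) (hv' : v' ∈ LamDag n)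
    (h1 : (n : ℤ) ∣ v.1 - v'.1) (h2 : (n : ℤ) ∣ v.2.1 - v'.2.1)
    (h3 : (2 * n : ℤ) ∣ (v.1 + v.2.1 + v.2.2) - (v'.1 + v'.2.1 + v'.2.2)) :
    v = v' := by
  rw [mem_LamDag] at hv hv'
  obtain ⟨a, b, c⟩ := v
  obtain ⟨a', b', c'⟩ := v'
  dsimp at *
  obtain ⟨c1, c2, c3, c4, c5, c6⟩ := hv
  obtain ⟨d1, d2, d3, d4, d5, d6⟩ := hv'
  have hnz : (0:ℤ) < n := by exact_mod_cast hn
  obtain ⟨p, hp⟩ := h1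
  obtain ⟨q, hq⟩ := h2
  obtain ⟨s, hs⟩ := h3
  have hc : c - c' = n * (2 * s - p - q) := by linarith
  set r : ℤ := 2 * s - p - q with hr
  have key : ∀ x : ℤ, -(2*(n:ℤ)) < n * x → n * x < 2*n → -1 ≤ x ∧ x ≤ 1 := by
    intro x hx1 hx2
    constructor
    · by_contra h
      push_neg at h
      have h2 : x ≤ -2 := by omega
      have : (n:ℤ) * x ≤ n * (-2) := mul_le_mul_of_nonneg_left h2 (le_of_lt hnz)
      linarith
    · by_contra h
      push_neg at h
      have h2 : 2 ≤ x := by omega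
      have : (n:ℤ) * 2 ≤ n * x := mul_le_mul_of_nonneg_left h2 (le_of_lt hnz)
      linarith
  have e1 : (n:ℤ) * (p + q) = (a + b) - (a' + b') := by ring_nf; linarith
  have e2 : (n:ℤ) * (p - q) = (a - b) - (a' - b') := by ring_nf; linarith
  have e3 : (n:ℤ) * (p + r) = (a + c) - (a' + c') := by ring_nf; linarith
  have e4 : (n:ℤ) * (p - r) = (a - c) - (a' - c') := by ring_nf; linarith
  have e5 : (n:ℤ) * (q + r) = (b + c) - (b' + c') := by ring_nf; linarith
  have e6 : (n:ℤ) * (q - r) = (b - c) - (b' - c') := by ring_nf; linarith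
  have b1 := key (p+q) (by rw [e1]; linarith [c1.1, c1.2, d1.1, d1.2]) (by rw [e1]; linarith [c1.1, c1.2, d1.1, d1.2])
  have b2 := key (p-q) (by rw [e2]; linarith [c2.1, c2.2, d2.1, d2.2]) (by rw [e2]; linarith [c2.1, c2.2, d2.1, d2.2])
  have b3 := key (p+r) (by rw [e3]; linarith [c3.1, c3.2, d3.1, d3.2]) (by rw [e3]; linarith [c3.1, c3.2, d3.1, d3.2])
  have b4 := key (p-r) (by rw [e4]; linarith [c4.1, c4.2, d4.1, d4.2]) (by rw [e4]; linarith [c4.1, c4.2, d4.1, d4.2])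
  have b5 := key (q+r) (by rw [e5]; linarith [c5.1, c5.2, d5.1, d5.2]) (by rw [e5]; linarith [c5.1, c5.2, d5.1, d5.2])
  have b6 := key (q-r) (by rw [e6]; linarith [c6.1, c6.2, d6.1, d6.2]) (by rw [e6]; linarith [c6.1, c6.2, d6.1, d6.2])
  have hpar : p + q + r = 2 * s := by omega
  have hz : p = 0 ∧ q = 0 ∧ r = 0 := by
    have h1 : -1 ≤ p ∧ p ≤ 1 := by omega
    have h2 : -1 ≤ q ∧ q ≤ 1 := by omega
    have h3 : -1 ≤ r ∧ r ≤ 1 := by omega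
    obtain ⟨p1,p2⟩ := h1
    obtain ⟨q1,q2⟩ := h2
    obtain ⟨r1,r2⟩ := h3
    clear_value r
    clear hr e1 e2 e3 e4 e5 e6 hp hq hc
    interval_cases p <;> interval_cases q <;> interval_cases r <;> omega
  have hp0 : a - a' = 0 := by rw [hp, hz.1]; ring
  have hq0 : b - b' = 0 := by rw [hq, hz.2.1]; ring
  have hc0 : c - c' = 0 := by rw [hc, hz.2.2]; ring
  have : a = a' := by linarith
  have : b = b' := by linarith
  have : c = c' := by linarith
  simp_all

lemma zpow_emod (α : ℂ) (hα : α ≠ 0) (N : ℤ) (h1 : α ^ N = 1) (x : ℤ) :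
    α ^ x = α ^ (x % N) := by
  conv_lhs => rw [← Int.emod_add_mul_ediv x N]
  rw [zpow_add₀ hα, zpow_mul, h1, one_zpow, mul_one]

lemma zsum_geo (N : ℕ) (α : ℂ) (hroot : α ^ (N : ℤ) = 1) :
    (∑ x ∈ Finset.Ico (0:ℤ) N, α ^ x) = if α = 1 then (N : ℂ) else 0 := by
  have hre : (∑ x ∈ Finset.Ico (0:ℤ) N, α ^ x) = ∑ i ∈ Finset.range N, α ^ i := by
    refine Finset.sum_nbij' (fun x => x.toNat) (fun i => (i : ℤ)) ?_ ?_ ?_ ?_ ?_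
    · intro x hx
      simp only [Finset.mem_Ico] at hx
      simp only [Finset.mem_range]
      omega
    · intro i hi
      simp only [Finset.mem_range] at hi
      simp only [Finset.mem_Ico]
      omega
    · intro x hx
      simp only [Finset.mem_Ico] at hx
      omega
    · intro i _
      simp
    · intro x hx
      simp only [Finset.mem_Ico] at hx
      rw [← zpow_natCast]
      congr 1
      simp only [Int.toNat_of_nonneg hx.1]
  rw [hre]
  split_ifs with h
  · simp [h]
  · rw [geom_sum_eq h N]
    rw [← zpow_natCast, hroot]
    simp

lemma exists_rep' (n : ℕ) (hn : 0 < n) (w : ℤ × ℤ × ℤ) :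
    ∃ v ∈ LamDag n, (n : ℤ) ∣ v.1 - w.1 ∧ (n : ℤ) ∣ v.2.1 - w.2.1 ∧
      (2 * n : ℤ) ∣ (v.1 + v.2.1 + v.2.2) - (w.1 + w.2.1 + w.2.2) := by
  obtain ⟨v, h1, h2⟩ := exists_rep n hn w
  exact ⟨v, h1, h2⟩

lemma Phi_delta (n : ℕ) (hn : 0 < n) (j k : ℤ × ℤ × ℤ) (hj : j ∈ X3 n) (hk : k ∈ X3 n) :
    Phi3 n (pt3 n j - pt3 n k) = if j = k then 1 else 0 := by
  have hnC : (n:ℂ) ≠ 0 := Nat.cast_ne_zero.mpr hn.ne'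
  have hnZ : (n:ℤ) ≠ 0 := by positivity
  have hnZ' : (0:ℤ) < n := by exact_mod_cast hn
  rw [mem_X3] at hj hk
  obtain ⟨j1, j2, j3⟩ := j
  obtain ⟨k1, k2, k3⟩ := k
  dsimp only at hj hk
  obtain ⟨⟨hjp1, hjp2⟩, hj1, hj2, hj3⟩ := hj
  obtain ⟨⟨hkp1, hkp2⟩, hk1, hk2, hk3⟩ := hk
  set u : ℂ := Complex.exp ((Real.pi : ℂ) * Complex.I / n) with hu_def
  have hu0 : u ≠ 0 := Complex.exp_ne_zero _
  set m1 : ℤ := j1 - k1 with hm1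
  set m2 : ℤ := j2 - k2 with hm2
  set m3 : ℤ := j3 - k3 with hm3
  -- u ^ t as exponential
  have hupow : ∀ t : ℤ, u ^ t = Complex.exp ((t:ℂ) * ((Real.pi : ℂ) * Complex.I / n)) :=
    fun t => (Complex.exp_int_mul _ t).symm
  -- roots of unity
  have root_of_even : ∀ t e : ℤ, t = 2 * e → (u ^ t) ^ (n : ℤ) = 1 := by
    intro t e ht
    rw [← zpow_mul, hupow]
    have harg : ((t * n : ℤ) : ℂ) * ((Real.pi : ℂ) * Complex.I / n)
        = (e : ℂ) * (2 * Real.pi * Complex.I) := by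
      push_cast [ht]
      field_simp
    rw [harg]
    exact Complex.exp_int_mul_two_pi_mul_I e
  have root3 : ∀ t : ℤ, (u ^ t) ^ ((2 * n : ℕ) : ℤ) = 1 := by
    intro t
    rw [← zpow_mul, hupow]
    have harg : ((t * (2 * n : ℕ) : ℤ) : ℂ) * ((Real.pi : ℂ) * Complex.I / n)
        = (t : ℂ) * (2 * Real.pi * Complex.I) := by
      push_cast
      field_simp
    rw [harg]
    exact Complex.exp_int_mul_two_pi_mul_I t
  have hdvd : ∀ t : ℤ, u ^ t = 1 → (2 * (n:ℤ)) ∣ t := by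
    intro t h
    rw [hupow] at h
    obtain ⟨e, he⟩ := Complex.exp_eq_one_iff.mp h
    have hπ : (Real.pi : ℂ) ≠ 0 := Complex.ofReal_ne_zero.mpr Real.pi_ne_zero
    have hI : Complex.I ≠ 0 := Complex.I_ne_zero
    have h2 : (t : ℂ) = 2 * e * n := by
      have h3 : (t:ℂ) * (Real.pi * Complex.I) = (2 * e * n) * (Real.pi * Complex.I) := by
        field_simp at he
        linear_combination (Real.pi * Complex.I) * he
      exact mul_right_cancel₀ (mul_ne_zero hπ hI) h3
    have : t = 2 * e * n := by exact_mod_cast h2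
    exact ⟨e, by linarith⟩
  have hpar1 : ∃ e : ℤ, m1 - m3 = 2 * e := ⟨(m1 - m3) / 2, by omega⟩
  have hpar2 : ∃ e : ℤ, m2 - m3 = 2 * e := ⟨(m2 - m3) / 2, by omega⟩
  obtain ⟨e1, he1⟩ := hpar1
  obtain ⟨e2, he2⟩ := hpar2
  have r1 : (u ^ (m1 - m3)) ^ (n : ℤ) = 1 := root_of_even _ e1 he1
  have r2 : (u ^ (m2 - m3)) ^ (n : ℤ) = 1 := root_of_even _ e2 he2
  have r3 : (u ^ m3) ^ ((2 * n : ℕ) : ℤ) = 1 := root3 m3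
  have hu1 : u ^ (m1 - m3) ≠ 0 := zpow_ne_zero _ hu0
  have hu2 : u ^ (m2 - m3) ≠ 0 := zpow_ne_zero _ hu0
  have hu3 : u ^ m3 ≠ 0 := zpow_ne_zero _ hu0
  -- the summand as power of u
  have hsummand : ∀ ν : ℤ × ℤ × ℤ,
      e3 ν (pt3 n (j1, j2, j3) - pt3 n (k1, k2, k3))
        = u ^ (ν.1 * m1 + ν.2.1 * m2 + ν.2.2 * m3) := by
    intro ν
    rw [hupow]
    simp only [e3, pt3]
    congr 1
    simp only [hm1, hm2, hm3, Prod.fst_sub, Prod.snd_sub]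
    push_cast
    field_simp
  -- decomposition
  have hdecomp : ∀ ν : ℤ × ℤ × ℤ,
      u ^ (ν.1 * m1 + ν.2.1 * m2 + ν.2.2 * m3)
        = (u ^ (m1 - m3)) ^ (ν.1 % (n:ℤ)) *
          ((u ^ (m2 - m3)) ^ (ν.2.1 % (n:ℤ)) *
           (u ^ m3) ^ ((ν.1 + ν.2.1 + ν.2.2) % ((2 * n : ℕ) : ℤ))) := by
    intro ν
    have key : ν.1 * m1 + ν.2.1 * m2 + ν.2.2 * m3
        = (m1 - m3) * ν.1 + ((m2 - m3) * ν.2.1 + m3 * (ν.1 + ν.2.1 + ν.2.2)) := by ring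
    rw [key, zpow_add₀ hu0, zpow_add₀ hu0, zpow_mul, zpow_mul, zpow_mul]
    rw [zpow_emod (u ^ (m1 - m3)) hu1 (n:ℤ) r1 ν.1,
        zpow_emod (u ^ (m2 - m3)) hu2 (n:ℤ) r2 ν.2.1,
        zpow_emod (u ^ m3) hu3 ((2*n : ℕ):ℤ) r3 (ν.1 + ν.2.1 + ν.2.2)]
  -- bijection with the product box
  have h2n : ((2 * n : ℕ) : ℤ) = 2 * (n:ℤ) := by push_cast; ring
  have hsum : ∑ ν ∈ LamDag n, e3 ν (pt3 n (j1, j2, j3) - pt3 n (k1, k2, k3))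
      = ∑ t ∈ (Finset.Ico (0:ℤ) (n:ℤ)) ×ˢ ((Finset.Ico (0:ℤ) (n:ℤ)) ×ˢ (Finset.Ico (0:ℤ) ((2*n : ℕ):ℤ))),
          (u ^ (m1 - m3)) ^ t.1 * ((u ^ (m2 - m3)) ^ t.2.1 * (u ^ m3) ^ t.2.2) := by
    refine Finset.sum_bij
      (fun ν _ => (ν.1 % (n:ℤ), ν.2.1 % (n:ℤ), (ν.1 + ν.2.1 + ν.2.2) % ((2*n : ℕ):ℤ)))
      ?_ ?_ ?_ ?_
    · intro ν _
      simp only [Finset.mem_product, Finset.mem_Ico]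
      refine ⟨⟨Int.emod_nonneg _ hnZ, Int.emod_lt_of_pos _ hnZ'⟩,
        ⟨Int.emod_nonneg _ hnZ, Int.emod_lt_of_pos _ hnZ'⟩,
        ⟨Int.emod_nonneg _ (by rw [h2n]; positivity), Int.emod_lt_of_pos _ (by rw [h2n]; positivity)⟩⟩
    · intro ν hν ν' hν' heq
      simp only [Prod.mk.injEq] at heq
      refine rep_unique n hn hν hν' ?_ ?_ ?_
      · have h : Int.ModEq (n:ℤ) ν.1 ν'.1 := heq.1
        exact h.symm.dvd
      · have h : Int.ModEq (n:ℤ) ν.2.1 ν'.2.1 := heq.2.1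
        exact h.symm.dvd
      · have h : Int.ModEq ((2*n:ℕ):ℤ) (ν.1 + ν.2.1 + ν.2.2) (ν'.1 + ν'.2.1 + ν'.2.2) := heq.2.2
        rw [h2n] at h
        exact h.symm.dvd
    · intro t ht
      simp only [Finset.mem_product, Finset.mem_Ico] at ht
      obtain ⟨v, hvmem, hv1, hv2, hv3⟩ := exists_rep' n hn (t.1, t.2.1, t.2.2 - t.1 - t.2.1)
      refine ⟨v, hvmem, ?_⟩
      have c1 : v.1 % (n:ℤ) = t.1 := by
        have h : t.1 ≡ v.1 [ZMOD (n:ℤ)] := Int.modEq_iff_dvd.mpr hv1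
        have h' : v.1 % (n:ℤ) = t.1 % (n:ℤ) := h.symm
        rw [h', Int.emod_eq_of_lt ht.1.1 ht.1.2]
      have c2 : v.2.1 % (n:ℤ) = t.2.1 := by
        have h : t.2.1 ≡ v.2.1 [ZMOD (n:ℤ)] := Int.modEq_iff_dvd.mpr hv2
        have h' : v.2.1 % (n:ℤ) = t.2.1 % (n:ℤ) := h.symm
        rw [h', Int.emod_eq_of_lt ht.2.1.1 ht.2.1.2]
      have c3 : (v.1 + v.2.1 + v.2.2) % ((2*n:ℕ):ℤ) = t.2.2 := by
        have hsimp : t.1 + t.2.1 + (t.2.2 - t.1 - t.2.1) = t.2.2 := by ring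
        rw [hsimp] at hv3
        have h : t.2.2 ≡ (v.1 + v.2.1 + v.2.2) [ZMOD (2*(n:ℤ))] := Int.modEq_iff_dvd.mpr hv3
        have h' : (v.1 + v.2.1 + v.2.2) % (2*(n:ℤ)) = t.2.2 % (2*(n:ℤ)) := h.symm
        rw [h2n, h', Int.emod_eq_of_lt ht.2.2.1 (by rw [← h2n]; exact ht.2.2.2)]
      simp only [Prod.ext_iff]
      exact ⟨c1, c2, c3⟩
    · intro ν hν
      rw [hsummand ν, hdecomp ν]
  simp only [Phi3]
  rw [hsum]
  rw [Finset.sum_product]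
  simp only [Finset.sum_product, ← Finset.mul_sum]
  rw [← Finset.sum_mul]
  rw [← Finset.sum_mul]
  rw [zsum_geo n _ r1, zsum_geo n _ r2, zsum_geo (2*n) _ r3]
  -- helper to turn small multiples of 2n into 0
  have hzero : ∀ t : ℤ, (2*(n:ℤ)) ∣ t → -(2*(n:ℤ)) < t → t < 2*(n:ℤ) → t = 0 := by
    rintro t ⟨e, he⟩ hlo hhi
    rcases lt_trichotomy e 0 with h | h | h
    · have : 2*(n:ℤ) * e ≤ 2*(n:ℤ) * (-1) := mul_le_mul_of_nonneg_left (by omega) (by positivity)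
      linarith
    · rw [he, h, mul_zero]
    · have : 2*(n:ℤ) * 1 ≤ 2*(n:ℤ) * e := mul_le_mul_of_nonneg_left (by omega) (by positivity)
      linarith
  by_cases hjk : ((j1, j2, j3) : ℤ × ℤ × ℤ) = (k1, k2, k3)
  · obtain ⟨q1, q2, q3⟩ : j1 = k1 ∧ j2 = k2 ∧ j3 = k3 := by
      simpa [Prod.ext_iff] using hjk
    have hm10 : m1 - m3 = 0 := by rw [hm1, hm3]; omega
    have hm20 : m2 - m3 = 0 := by rw [hm2, hm3]; omega
    have hm30 : m3 = 0 := by rw [hm3]; omega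
    rw [if_pos hjk, hm10, hm20, hm30, zpow_zero]
    rw [if_pos rfl, if_pos rfl]
    push_cast
    field_simp
  · rw [if_neg hjk]
    by_cases hg : u ^ m3 = 1
    · have hm30 : m3 = 0 := by
        refine hzero m3 (hdvd m3 hg) ?_ ?_ <;> (rw [hm3]; omega)
      by_cases hα : u ^ (m1 - m3) = 1
      · by_cases hβ : u ^ (m2 - m3) = 1
        · exfalso
          have hm10 : m1 - m3 = 0 := by
            refine hzero _ (hdvd _ hα) ?_ ?_ <;> (rw [hm1, hm3]; omega)
          have hm20 : m2 - m3 = 0 := by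
            refine hzero _ (hdvd _ hβ) ?_ ?_ <;> (rw [hm2, hm3]; omega)
          apply hjk
          have : m1 = 0 := by omega
          have : m2 = 0 := by omega
          simp only [Prod.ext_iff]
          refine ⟨?_, ?_, ?_⟩ <;> omega
        · rw [if_neg hβ]
          ring
      · rw [if_neg hα]
        ring
    · rw [if_neg hg]
      ring

end TrigAux3D
theorem trig_interpolation_3d (n : ℕ) (hn : 0 < n) (f : ℝ × ℝ × ℝ → ℂ)
    (j : ℤ × ℤ × ℤ) (hj : j ∈ X3 n) :
    ∑ k ∈ X3 n, f (pt3 n k) * Phi3 n (pt3 n j - pt3 n k) = f (pt3 n j) := by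
  have hstep : ∑ k ∈ X3 n, f (pt3 n k) * Phi3 n (pt3 n j - pt3 n k)
      = ∑ k ∈ X3 n, if j = k then f (pt3 n k) else 0 := by
    refine Finset.sum_congr rfl fun k hk => ?_
    rw [TrigAux3D.Phi_delta n hn j k hj hk]
    by_cases h : j = k <;> simp [h]
  rw [hstep, Finset.sum_ite_eq (X3 n) j (fun k => f (pt3 n k)), if_pos hj]
end

section
/- Let n be a positive integer and let f : ℝ³ → ℂ. Define I_n^* f(x) := Σ_{k ∈ X_n^*} f(k/(2n)) · Φ_n^*(x − k/(2n)). Then for every j ∈ X_n^*: if |j_i| < n for all i = 1,2,3, then I_n^* f(j/(2n)) = f(j/(2n)); otherwise I_n^* f(j/(2n)) = Σ_{k ∈ S_j} f(k/(2n)), where S_j := {k ∈ X_n^* : k − j ∈ 2nℤ³}. -/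
open MeasureTheory Complex

attribute [local instance] Classical.propDecidable

/-- Λ_m^{†*} = {k : |k_ν + k_μ| ≤ m and |k_ν - k_μ| ≤ m for all ν < μ}. -/
noncomputable def LamDagStar (m : ℕ) : Finset (ℤ × ℤ × ℤ) :=
  (box3 m).filter fun k =>
    |k.1 + k.2.1| ≤ (m : ℤ) ∧ |k.1 - k.2.1| ≤ (m : ℤ) ∧
    |k.1 + k.2.2| ≤ (m : ℤ) ∧ |k.1 - k.2.2| ≤ (m : ℤ) ∧
    |k.2.1 + k.2.2| ≤ (m : ℤ) ∧ |k.2.1 - k.2.2| ≤ (m : ℤ)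

/-- X_n^* = {k : k1 ≡ k2 ≡ k3 (mod 2), |k_i| ≤ n}. -/
noncomputable def X3star (n : ℕ) : Finset (ℤ × ℤ × ℤ) :=
  (box3 n).filter fun k => k.1 % 2 = k.2.1 % 2 ∧ k.2.1 % 2 = k.2.2 % 2

/-- Congruence modulo the face-centered cubic lattice Bℤ³. -/
def fccCong (n : ℕ) (μ ν : ℤ × ℤ × ℤ) : Prop :=
  ∃ m : ℤ × ℤ × ℤ, Even (m.1 + m.2.1 + m.2.2) ∧
    μ.1 - ν.1 = (n : ℤ) * m.1 ∧ μ.2.1 - ν.2.1 = (n : ℤ) * m.2.1 ∧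
    μ.2.2 - ν.2.2 = (n : ℤ) * m.2.2

/-- μ_ν = 1 / #{μ ∈ Λ_n^{†*} : μ ≡ ν mod Bℤ³}. -/
noncomputable def mu3 (n : ℕ) (ν : ℤ × ℤ × ℤ) : ℝ :=
  1 / (((LamDagStar n).filter (fun μ => fccCong n μ ν)).card : ℝ)

/-- Φ_n^*(x) = (1/(2n³)) Σ_{ν ∈ Λ_n^{†*}} μ_ν e_ν(x). -/
noncomputable def Phi3star (n : ℕ) (x : ℝ × ℝ × ℝ) : ℂ :=
  (1 / (2 * (n : ℂ) ^ 3)) * ∑ ν ∈ LamDagStar n, (mu3 n ν : ℂ) * e3 ν x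

/-- I_n^* f(x) = Σ_{k ∈ X_n^*} f(k/(2n)) Φ_n^*(x - k/(2n)). -/
noncomputable def Istar3 (n : ℕ) (f : ℝ × ℝ × ℝ → ℂ) (x : ℝ × ℝ × ℝ) : ℂ :=
  ∑ k ∈ X3star n, f (pt3 n k) * Phi3star n (x - pt3 n k)

lemma fccCong_iff (n : ℕ) (a b : ℤ × ℤ × ℤ) :
    fccCong n a b ↔
      (2 * (n:ℤ)) ∣ (a.1 + a.2.1 + a.2.2) - (b.1 + b.2.1 + b.2.2) ∧
      (n:ℤ) ∣ a.2.1 - b.2.1 ∧ (n:ℤ) ∣ a.2.2 - b.2.2 := by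
  constructor
  · rintro ⟨m, ⟨k, hk⟩, h1, h2, h3⟩
    have hs : a.1 + a.2.1 + a.2.2 - (b.1 + b.2.1 + b.2.2)
        = (a.1 - b.1) + (a.2.1 - b.2.1) + (a.2.2 - b.2.2) := by ring
    refine ⟨⟨k, by rw [hs, h1, h2, h3, ← mul_add, ← mul_add, hk]; ring⟩,
      ⟨m.2.1, h2⟩, ⟨m.2.2, h3⟩⟩
  · rintro ⟨⟨k, hk⟩, ⟨b2, hb2⟩, ⟨b3, hb3⟩⟩
    refine ⟨(2*k - b2 - b3, b2, b3), ⟨k, by ring⟩, ?_, hb2, hb3⟩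
    simp only
    have : a.1 - b.1 = ((a.1 + a.2.1 + a.2.2) - (b.1 + b.2.1 + b.2.2))
        - (a.2.1 - b.2.1) - (a.2.2 - b.2.2) := by ring
    rw [this, hk, hb2, hb3]; ring

lemma fccCong_refl (n : ℕ) (a : ℤ × ℤ × ℤ) : fccCong n a a := by
  simp [fccCong_iff]

lemma fccCong_symm {n : ℕ} {a b : ℤ × ℤ × ℤ} (h : fccCong n a b) : fccCong n b a := by
  rw [fccCong_iff] at h ⊢
  exact ⟨dvd_sub_comm.mp h.1, dvd_sub_comm.mp h.2.1, dvd_sub_comm.mp h.2.2⟩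

lemma fccCong_trans {n : ℕ} {a b c : ℤ × ℤ × ℤ} (h1 : fccCong n a b)
    (h2 : fccCong n b c) : fccCong n a c := by
  rw [fccCong_iff] at h1 h2 ⊢
  obtain ⟨x1, x2, x3⟩ := h1
  obtain ⟨y1, y2, y3⟩ := h2
  exact ⟨by have := dvd_add x1 y1; simpa [sub_add_sub_cancel] using this,
    by have := dvd_add x2 y2; simpa [sub_add_sub_cancel] using this,
    by have := dvd_add x3 y3; simpa [sub_add_sub_cancel] using this⟩

noncomputable def RepD (n : ℕ) : Finset (ℤ × ℤ × ℤ) :=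
  (Finset.Ico (0:ℤ) (2*n)) ×ˢ ((Finset.Ico (0:ℤ) n) ×ˢ (Finset.Ico (0:ℤ) n))

def crep (n : ℕ) (v : ℤ × ℤ × ℤ) : ℤ × ℤ × ℤ :=
  ((v.1 + v.2.1 + v.2.2 - v.2.1 % n - v.2.2 % n) % (2*n), v.2.1 % n, v.2.2 % n)

lemma emod_sub_self_dvd (m a : ℤ) : m ∣ a % m - a :=
  ⟨-(a / m), by rw [Int.emod_def]; ring⟩

lemma emod_eq_emod_of_dvd_sub {m a b : ℤ} (h : m ∣ a - b) : a % m = b % m :=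
  Int.modEq_iff_dvd.2 (dvd_sub_comm.mp h)

lemma crep_mem (n : ℕ) (hn : 0 < n) (v : ℤ × ℤ × ℤ) : crep n v ∈ RepD n := by
  have h1 : (0:ℤ) < n := by exact_mod_cast hn
  have h2 : (0:ℤ) < 2*n := by linarith
  simp only [RepD, crep, Finset.mem_product, Finset.mem_Ico]
  exact ⟨⟨Int.emod_nonneg _ h2.ne', Int.emod_lt_of_pos _ h2⟩,
    ⟨Int.emod_nonneg _ h1.ne', Int.emod_lt_of_pos _ h1⟩,
    ⟨Int.emod_nonneg _ h1.ne', Int.emod_lt_of_pos _ h1⟩⟩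

lemma crep_cong (n : ℕ) (v : ℤ × ℤ × ℤ) : fccCong n (crep n v) v := by
  rw [fccCong_iff]
  refine ⟨?_, emod_sub_self_dvd _ _, emod_sub_self_dvd _ _⟩
  set S := v.1 + v.2.1 + v.2.2 - v.2.1 % (n:ℤ) - v.2.2 % (n:ℤ) with hS
  have : (crep n v).1 + (crep n v).2.1 + (crep n v).2.2 - (v.1 + v.2.1 + v.2.2)
      = S % (2*n) - S := by simp only [crep, hS]; ring
  rw [this]; exact emod_sub_self_dvd _ _

lemma crep_of_mem (n : ℕ) (r : ℤ × ℤ × ℤ) (hr : r ∈ RepD n) :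
    crep n r = r := by
  simp only [RepD, Finset.mem_product, Finset.mem_Ico] at hr
  obtain ⟨⟨h10, h11⟩, ⟨h20, h21⟩, h30, h31⟩ := hr
  have m2 : r.2.1 % (n:ℤ) = r.2.1 := Int.emod_eq_of_lt h20 h21
  have m3 : r.2.2 % (n:ℤ) = r.2.2 := Int.emod_eq_of_lt h30 h31
  simp only [crep, m2, m3]
  have h : r.1 + r.2.1 + r.2.2 - r.2.1 - r.2.2 = r.1 := by ring
  rw [h, Int.emod_eq_of_lt h10 h11]

lemma crep_eq_of_cong (n : ℕ) {a b : ℤ × ℤ × ℤ} (h : fccCong n a b) :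
    crep n a = crep n b := by
  rw [fccCong_iff] at h
  obtain ⟨h1, h2, h3⟩ := h
  have m2 : a.2.1 % (n:ℤ) = b.2.1 % n := emod_eq_emod_of_dvd_sub h2
  have m3 : a.2.2 % (n:ℤ) = b.2.2 % n := emod_eq_emod_of_dvd_sub h3
  have m1 : (a.1 + a.2.1 + a.2.2 - b.2.1 % (n:ℤ) - b.2.2 % n) % (2*n)
      = (b.1 + b.2.1 + b.2.2 - b.2.1 % (n:ℤ) - b.2.2 % n) % (2*n) := by
    apply emod_eq_emod_of_dvd_sub
    have e : (a.1 + a.2.1 + a.2.2 - b.2.1 % (n:ℤ) - b.2.2 % n)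
        - (b.1 + b.2.1 + b.2.2 - b.2.1 % (n:ℤ) - b.2.2 % n)
        = (a.1 + a.2.1 + a.2.2) - (b.1 + b.2.1 + b.2.2) := by ring
    rw [e]; exact h1
  simp only [crep, m2, m3, m1]

lemma mem_LamDagStar {n : ℕ} {k : ℤ × ℤ × ℤ} :
    k ∈ LamDagStar n ↔
      |k.1 + k.2.1| ≤ (n : ℤ) ∧ |k.1 - k.2.1| ≤ (n : ℤ) ∧
      |k.1 + k.2.2| ≤ (n : ℤ) ∧ |k.1 - k.2.2| ≤ (n : ℤ) ∧
      |k.2.1 + k.2.2| ≤ (n : ℤ) ∧ |k.2.1 - k.2.2| ≤ (n : ℤ) := by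
  simp only [LamDagStar, box3, Finset.mem_filter, Finset.mem_Icc, Prod.le_def, abs_le]
  omega

lemma reduce_step (n : ℕ) (hn : 0 < n) (v u : ℤ × ℤ × ℤ)
    (hu2 : u.1 ^ 2 + u.2.1 ^ 2 + u.2.2 ^ 2 = 2) (hue : Even (u.1 + u.2.1 + u.2.2))
    (hd : (n : ℤ) < |v.1 * u.1 + v.2.1 * u.2.1 + v.2.2 * u.2.2|) :
    ∃ v', fccCong n v' v ∧
      (v'.1 ^ 2 + v'.2.1 ^ 2 + v'.2.2 ^ 2).toNat
        < (v.1 ^ 2 + v.2.1 ^ 2 + v.2.2 ^ 2).toNat := by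
  set d : ℤ := v.1 * u.1 + v.2.1 * u.2.1 + v.2.2 * u.2.2 with hdd
  set s : ℤ := if 0 ≤ d then 1 else -1 with hs
  refine ⟨(v.1 - s * n * u.1, v.2.1 - s * n * u.2.1, v.2.2 - s * n * u.2.2), ?_, ?_⟩
  · refine ⟨(-(s * u.1), -(s * u.2.1), -(s * u.2.2)), ?_, by ring, by ring, by ring⟩
    have : -(s * u.1) + -(s * u.2.1) + -(s * u.2.2) = (-s) * (u.1 + u.2.1 + u.2.2) := by
      ring
    rw [this]
    exact hue.mul_left _
  · have hs2 : s ^ 2 = 1 := by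
      rcases le_or_gt 0 d with h | h
      · simp [hs, h]
      · simp [hs, not_le.mpr h]
    have hsd : s * d = |d| := by
      rcases le_or_gt 0 d with h | h
      · simp [hs, h, abs_of_nonneg h]
      · simp [hs, not_le.2 h, abs_of_neg h]
    have hexp : (v.1 - s * n * u.1) ^ 2 + (v.2.1 - s * n * u.2.1) ^ 2
        + (v.2.2 - s * n * u.2.2) ^ 2
        = (v.1 ^ 2 + v.2.1 ^ 2 + v.2.2 ^ 2) - 2 * (s * d) * n
          + s ^ 2 * n ^ 2 * (u.1 ^ 2 + u.2.1 ^ 2 + u.2.2 ^ 2) := by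
      rw [hdd]; ring
    rw [hexp, hsd, hs2, hu2]
    have hn' : (0 : ℤ) < n := by exact_mod_cast hn
    have hlt : (v.1 ^ 2 + v.2.1 ^ 2 + v.2.2 ^ 2) - 2 * |d| * n + 1 * n ^ 2 * 2
        < v.1 ^ 2 + v.2.1 ^ 2 + v.2.2 ^ 2 := by nlinarith
    have h0 : (0 : ℤ) ≤ (v.1 - s * n * u.1) ^ 2 + (v.2.1 - s * n * u.2.1) ^ 2
        + (v.2.2 - s * n * u.2.2) ^ 2 := by positivity
    rw [hexp, hsd, hs2, hu2] at h0
    omega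

lemma exists_rep (n : ℕ) (hn : 0 < n) (v : ℤ × ℤ × ℤ) :
    ∃ ν ∈ LamDagStar n, fccCong n ν v := by
  generalize hN : (v.1 ^ 2 + v.2.1 ^ 2 + v.2.2 ^ 2).toNat = N
  induction N using Nat.strong_induction_on generalizing v with
  | _ N ih =>
  by_cases hv : v ∈ LamDagStar n
  · exact ⟨v, hv, fccCong_refl n v⟩
  · rw [mem_LamDagStar] at hv
    push_neg at hv
    have key : ∃ v', fccCong n v' v ∧
        (v'.1 ^ 2 + v'.2.1 ^ 2 + v'.2.2 ^ 2).toNat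
          < (v.1 ^ 2 + v.2.1 ^ 2 + v.2.2 ^ 2).toNat := by
      by_cases h1 : |v.1 + v.2.1| ≤ (n : ℤ)
      · by_cases h2 : |v.1 - v.2.1| ≤ (n : ℤ)
        · by_cases h3 : |v.1 + v.2.2| ≤ (n : ℤ)
          · by_cases h4 : |v.1 - v.2.2| ≤ (n : ℤ)
            · by_cases h5 : |v.2.1 + v.2.2| ≤ (n : ℤ)
              · have h6 := hv h1 h2 h3 h4 h5
                exact reduce_step n hn v (0, 1, -1) (by norm_num) (by decide)
                  (by simpa [← sub_eq_add_neg] using h6)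
              · exact reduce_step n hn v (0, 1, 1) (by norm_num) (by decide)
                  (by push_neg at h5; simpa using h5)
            · exact reduce_step n hn v (1, 0, -1) (by norm_num) (by decide)
                (by push_neg at h4; simpa [← sub_eq_add_neg] using h4)
          · exact reduce_step n hn v (1, 0, 1) (by norm_num) (by decide)
              (by push_neg at h3; simpa using h3)
        · exact reduce_step n hn v (1, -1, 0) (by norm_num) (by decide)
            (by push_neg at h2; simpa [← sub_eq_add_neg] using h2)
      · exact reduce_step n hn v (1, 1, 0) (by norm_num) (by decide)
          (by push_neg at h1; simpa using h1)
    obtain ⟨v', hc, hlt⟩ := key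
    obtain ⟨ν, hν, hcc⟩ := ih _ (hN ▸ hlt) v' rfl
    exact ⟨ν, hν, fccCong_trans hcc hc⟩


noncomputable def chi (n : ℕ) (t : ℤ) : ℂ :=
  Complex.exp (Real.pi * Complex.I * t / n)

lemma chi_add (n : ℕ) (s t : ℤ) : chi n (s + t) = chi n s * chi n t := by
  rw [chi, chi, chi, ← Complex.exp_add]
  congr 1
  push_cast
  ring

lemma chi_eq_one_iff (n : ℕ) (hn : 0 < n) (t : ℤ) :
    chi n t = 1 ↔ (2 * (n : ℤ)) ∣ t := by
  have hn' : (n : ℂ) ≠ 0 := Nat.cast_ne_zero.2 hn.ne'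
  have hpi : (Real.pi : ℂ) * Complex.I ≠ 0 := by
    simp [Complex.ext_iff, Real.pi_ne_zero]
  rw [chi, Complex.exp_eq_one_iff]
  constructor
  · rintro ⟨k, hk⟩
    refine ⟨k, ?_⟩
    have h2 : (Real.pi : ℂ) * Complex.I * t = (Real.pi : ℂ) * Complex.I * (2 * n * k) := by
      field_simp at hk
      rw [hk]; ring
    have h3 : (t : ℂ) = ((2 * n * k : ℤ) : ℂ) := by
      have := mul_left_cancel₀ hpi h2
      push_cast
      exact this
    exact_mod_cast h3
  · rintro ⟨k, rfl⟩
    refine ⟨k, ?_⟩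
    field_simp
    push_cast
    ring

lemma chi_pow (n : ℕ) (d : ℤ) (i : ℕ) : chi n ((i : ℤ) * d) = (chi n d) ^ i := by
  rw [chi, chi, ← Complex.exp_nat_mul]
  congr 1
  push_cast
  ring

lemma chi_pow_two_n (n : ℕ) (hn : 0 < n) (d : ℤ) : (chi n d) ^ (2 * n) = 1 := by
  rw [← chi_pow, chi_eq_one_iff n hn]
  exact ⟨d, by push_cast; ring⟩

lemma chi_pow_n_of_even (n : ℕ) (hn : 0 < n) (d : ℤ) (hd : (2:ℤ) ∣ d) :
    (chi n d) ^ n = 1 := by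
  obtain ⟨e, rfl⟩ := hd
  rw [← chi_pow, chi_eq_one_iff n hn]
  exact ⟨e, by push_cast; ring⟩

lemma chi_dot_congr (n : ℕ) (hn : 0 < n) (d : ℤ × ℤ × ℤ)
    (hp1 : (2:ℤ) ∣ d.1 - d.2.1) (hp2 : (2:ℤ) ∣ d.2.1 - d.2.2)
    {a b : ℤ × ℤ × ℤ} (h : fccCong n a b) :
    chi n (a.1 * d.1 + a.2.1 * d.2.1 + a.2.2 * d.2.2)
      = chi n (b.1 * d.1 + b.2.1 * d.2.1 + b.2.2 * d.2.2) := by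
  obtain ⟨m, hme, h1, h2, h3⟩ := h
  obtain ⟨t, ht⟩ := hme
  obtain ⟨x, hx⟩ := hp1
  obtain ⟨y, hy⟩ := hp2
  have key : a.1 * d.1 + a.2.1 * d.2.1 + a.2.2 * d.2.2
      = (b.1 * d.1 + b.2.1 * d.2.1 + b.2.2 * d.2.2)
        + (n : ℤ) * (m.1 * d.1 + m.2.1 * d.2.1 + m.2.2 * d.2.2) := by
    linear_combination d.1 * h1 + d.2.1 * h2 + d.2.2 * h3
  have hev : m.1 * d.1 + m.2.1 * d.2.1 + m.2.2 * d.2.2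
      = 2 * (d.1 * t - m.2.1 * x - m.2.2 * x - m.2.2 * y) := by
    linear_combination d.1 * ht - m.2.1 * hx - m.2.2 * hx - m.2.2 * hy
  have hone : chi n ((n : ℤ) * (m.1 * d.1 + m.2.1 * d.2.1 + m.2.2 * d.2.2)) = 1 := by
    rw [chi_eq_one_iff n hn, hev]
    exact ⟨d.1 * t - m.2.1 * x - m.2.2 * x - m.2.2 * y, by ring⟩
  rw [key, chi_add, hone, mul_one]

lemma sum_Ico_int (m : ℕ) (f : ℤ → ℂ) :
    ∑ x ∈ Finset.Ico (0:ℤ) (m:ℤ), f x = ∑ i ∈ Finset.range m, f (i:ℤ) := by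
  induction m with
  | zero => simp
  | succ k ih =>
    have : ((k:ℤ) + 1 : ℤ) = ((k + 1 : ℕ) : ℤ) := by push_cast; ring
    rw [Finset.sum_range_succ, ← ih, ← this]
    rw [show Finset.Ico (0:ℤ) ((k:ℤ)+1) = insert (k:ℤ) (Finset.Ico (0:ℤ) (k:ℤ)) by
      ext x
      simp only [Finset.mem_Ico, Finset.mem_insert]
      omega]
    rw [Finset.sum_insert (by simp)]
    ring

lemma geom_block (m : ℕ) (z : ℂ) (hz : z ^ m = 1) :
    ∑ i ∈ Finset.range m, z ^ i = if z = 1 then (m : ℂ) else 0 := by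
  split_ifs with h
  · simp [h]
  · rw [geom_sum_eq h, hz]
    simp


lemma rep_char_sum (n : ℕ) (hn : 0 < n) (d : ℤ × ℤ × ℤ)
    (hp1 : (2:ℤ) ∣ d.1 - d.2.1) (hp2 : (2:ℤ) ∣ d.2.1 - d.2.2) :
    ∑ r ∈ RepD n, chi n (r.1 * d.1 + r.2.1 * d.2.1 + r.2.2 * d.2.2)
      = if ((2*(n:ℤ)) ∣ d.1 ∧ (2*(n:ℤ)) ∣ d.2.1 ∧ (2*(n:ℤ)) ∣ d.2.2)
          then 2 * (n:ℂ)^3 else 0 := by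
  have hsplit : ∑ r ∈ RepD n, chi n (r.1 * d.1 + r.2.1 * d.2.1 + r.2.2 * d.2.2)
      = (∑ i ∈ Finset.range (2*n), (chi n d.1) ^ i)
        * ((∑ i ∈ Finset.range n, (chi n d.2.1) ^ i)
          * (∑ i ∈ Finset.range n, (chi n d.2.2) ^ i)) := by
    rw [RepD, Finset.sum_product]
    rw [show (2*(n:ℤ)) = ((2*n : ℕ) : ℤ) from by push_cast; ring]
    rw [sum_Ico_int (2*n) (fun x => ∑ y ∈ (Finset.Ico (0:ℤ) (n:ℤ)) ×ˢ (Finset.Ico (0:ℤ) (n:ℤ)),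
      chi n (x * d.1 + y.1 * d.2.1 + y.2 * d.2.2))]
    rw [Finset.sum_mul]
    refine Finset.sum_congr rfl fun i _ => ?_
    rw [Finset.sum_product]
    rw [sum_Ico_int n (fun a => ∑ y ∈ Finset.Ico (0:ℤ) (n:ℤ),
      chi n ((i:ℤ) * d.1 + a * d.2.1 + y * d.2.2))]
    rw [mul_comm ((chi n d.1)^i) _, Finset.sum_mul, Finset.sum_mul]
    refine Finset.sum_congr rfl fun a _ => ?_
    rw [sum_Ico_int n (fun b => chi n ((i:ℤ) * d.1 + (a:ℤ) * d.2.1 + b * d.2.2))]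
    simp only [Finset.mul_sum, Finset.sum_mul]
    refine Finset.sum_congr rfl fun b _ => ?_
    rw [show (i:ℤ) * d.1 + (a:ℤ) * d.2.1 + (b:ℤ) * d.2.2
      = (i:ℤ) * d.1 + ((a:ℤ) * d.2.1 + (b:ℤ) * d.2.2) from by ring,
      chi_add, chi_add, chi_pow, chi_pow, chi_pow]
    ring
  rw [hsplit]
  have g1 : ∑ i ∈ Finset.range (2*n), (chi n d.1) ^ i
      = if chi n d.1 = 1 then ((2*n : ℕ) : ℂ) else 0 :=
    geom_block (2*n) _ (chi_pow_two_n n hn d.1)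
  by_cases c1 : (2*(n:ℤ)) ∣ d.1
  · have z1 : chi n d.1 = 1 := (chi_eq_one_iff n hn d.1).2 c1
    have hd1e : (2:ℤ) ∣ d.1 := dvd_trans ⟨(n:ℤ), by ring⟩ c1
    have hd2e : (2:ℤ) ∣ d.2.1 := by
      have := dvd_sub hd1e hp1; simpa using this
    have hd3e : (2:ℤ) ∣ d.2.2 := by
      have := dvd_sub hd2e hp2; simpa using this
    by_cases c2 : (2*(n:ℤ)) ∣ d.2.1
    · by_cases c3 : (2*(n:ℤ)) ∣ d.2.2
      · have z2 : chi n d.2.1 = 1 := (chi_eq_one_iff n hn _).2 c2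
        have z3 : chi n d.2.2 = 1 := (chi_eq_one_iff n hn _).2 c3
        simp only [z1, z2, z3, one_pow, Finset.sum_const, Finset.card_range,
          nsmul_eq_mul, mul_one, if_pos (⟨c1, c2, c3⟩ : _ ∧ _ ∧ _)]
        push_cast
        ring
      · have z3 : chi n d.2.2 ≠ 1 := fun h => c3 ((chi_eq_one_iff n hn _).1 h)
        rw [geom_block n _ (chi_pow_n_of_even n hn _ hd3e), if_neg z3]
        simp [c3]
    · have z2 : chi n d.2.1 ≠ 1 := fun h => c2 ((chi_eq_one_iff n hn _).1 h)
      rw [geom_block n _ (chi_pow_n_of_even n hn _ hd2e), if_neg z2]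
      simp [c2]
  · have z1 : chi n d.1 ≠ 1 := fun h => c1 ((chi_eq_one_iff n hn _).1 h)
    rw [g1, if_neg z1]
    simp [c1]

lemma regroup (n : ℕ) (hn : 0 < n) (g : ℤ × ℤ × ℤ → ℂ)
    (hg : ∀ a b, fccCong n a b → g a = g b) :
    ∑ ν ∈ LamDagStar n, (mu3 n ν : ℂ) * g ν = ∑ r ∈ RepD n, g r := by
  rw [← Finset.sum_fiberwise_of_maps_to (g := crep n) (fun ν _ => crep_mem n hn ν)]
  refine Finset.sum_congr rfl fun r hr => ?_
  have hfil : (LamDagStar n).filter (fun ν => crep n ν = r)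
      = (LamDagStar n).filter (fun ν => fccCong n ν r) := by
    apply Finset.filter_congr
    intro ν _
    constructor
    · intro h
      have := fccCong_symm (crep_cong n ν)
      rwa [h] at this
    · intro h
      rw [crep_eq_of_cong n h, crep_of_mem n r hr]
  rw [hfil]
  set F := (LamDagStar n).filter (fun ν => fccCong n ν r) with hF
  obtain ⟨ν₀, hν₀, hc₀⟩ := exists_rep n hn r
  have hne : F.Nonempty := ⟨ν₀, Finset.mem_filter.2 ⟨hν₀, hc₀⟩⟩
  have hcard : (F.card : ℂ) ≠ 0 := by
    exact_mod_cast Nat.cast_ne_zero.2 (Finset.card_ne_zero_of_mem hne.choose_spec)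
  have hterm : ∀ ν ∈ F, (mu3 n ν : ℂ) * g ν = (1 / (F.card : ℂ)) * g r := by
    intro ν hν
    obtain ⟨hmem, hcc⟩ := Finset.mem_filter.1 hν
    have hfib : (LamDagStar n).filter (fun μ => fccCong n μ ν) = F := by
      rw [hF]
      apply Finset.filter_congr
      intro μ _
      exact ⟨fun h => fccCong_trans h hcc, fun h => fccCong_trans h (fccCong_symm hcc)⟩
    rw [hg ν r hcc, mu3, hfib]
    push_cast
    ring
  rw [Finset.sum_congr rfl hterm, Finset.sum_const, nsmul_eq_mul]
  field_simp

lemma e3_pt (n : ℕ) (hn : 0 < n) (ν d : ℤ × ℤ × ℤ) :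
    e3 ν (pt3 n d) = chi n (ν.1 * d.1 + ν.2.1 * d.2.1 + ν.2.2 * d.2.2) := by
  rw [e3, pt3, chi]
  congr 1
  have hn' : (n : ℂ) ≠ 0 := Nat.cast_ne_zero.2 hn.ne'
  push_cast
  field_simp

lemma Phi_eval (n : ℕ) (hn : 0 < n) (d : ℤ × ℤ × ℤ)
    (hp1 : (2:ℤ) ∣ d.1 - d.2.1) (hp2 : (2:ℤ) ∣ d.2.1 - d.2.2) :
    Phi3star n (pt3 n d)
      = if ((2*(n:ℤ)) ∣ d.1 ∧ (2*(n:ℤ)) ∣ d.2.1 ∧ (2*(n:ℤ)) ∣ d.2.2)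
          then 1 else 0 := by
  rw [Phi3star]
  rw [Finset.sum_congr rfl (fun ν _ => by rw [e3_pt n hn ν d] :
    ∀ ν ∈ LamDagStar n, (mu3 n ν : ℂ) * e3 ν (pt3 n d)
      = (mu3 n ν : ℂ) * chi n (ν.1 * d.1 + ν.2.1 * d.2.1 + ν.2.2 * d.2.2))]
  rw [regroup n hn _ (fun a b h => chi_dot_congr n hn d hp1 hp2 h)]
  rw [rep_char_sum n hn d hp1 hp2]
  have hn' : (n : ℂ) ≠ 0 := Nat.cast_ne_zero.2 hn.ne'
  split_ifs
  · field_simp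
  · ring

lemma mem_X3star {n : ℕ} {k : ℤ × ℤ × ℤ} :
    k ∈ X3star n ↔ (-(n:ℤ) ≤ k.1 ∧ k.1 ≤ n) ∧ (-(n:ℤ) ≤ k.2.1 ∧ k.2.1 ≤ n)
      ∧ (-(n:ℤ) ≤ k.2.2 ∧ k.2.2 ≤ n)
      ∧ k.1 % 2 = k.2.1 % 2 ∧ k.2.1 % 2 = k.2.2 % 2 := by
  simp only [X3star, box3, Finset.mem_filter, Finset.mem_Icc, Prod.le_def]
  tauto

lemma Istar_eval (n : ℕ) (hn : 0 < n) (f : ℝ × ℝ × ℝ → ℂ)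
    (j : ℤ × ℤ × ℤ) (hj : j ∈ X3star n) :
    Istar3 n f (pt3 n j)
      = ∑ k ∈ (X3star n).filter (fun k => (2 * (n : ℤ)) ∣ k.1 - j.1 ∧
          (2 * (n : ℤ)) ∣ k.2.1 - j.2.1 ∧ (2 * (n : ℤ)) ∣ k.2.2 - j.2.2),
        f (pt3 n k) := by
  rw [Istar3, Finset.sum_filter]
  refine Finset.sum_congr rfl fun k hk => ?_
  have hsub : pt3 n j - pt3 n k = pt3 n (j - k) := by
    simp only [pt3, Prod.mk_sub_mk, Prod.ext_iff, Prod.fst_sub, Prod.snd_sub]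
    refine ⟨?_, ?_, ?_⟩ <;> push_cast <;> ring
  rw [hsub]
  obtain ⟨_, _, _, hj4, hj5⟩ := mem_X3star.1 hj
  obtain ⟨_, _, _, hk4, hk5⟩ := mem_X3star.1 hk
  have hp1 : (2:ℤ) ∣ (j - k).1 - (j - k).2.1 := by
    simp only [Prod.fst_sub, Prod.snd_sub]
    omega
  have hp2 : (2:ℤ) ∣ (j - k).2.1 - (j - k).2.2 := by
    simp only [Prod.fst_sub, Prod.snd_sub]
    omega
  rw [Phi_eval n hn (j - k) hp1 hp2]
  have hiff : ((2*(n:ℤ)) ∣ (j - k).1 ∧ (2*(n:ℤ)) ∣ (j - k).2.1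
      ∧ (2*(n:ℤ)) ∣ (j - k).2.2)
      ↔ ((2*(n:ℤ)) ∣ k.1 - j.1 ∧ (2*(n:ℤ)) ∣ k.2.1 - j.2.1
        ∧ (2*(n:ℤ)) ∣ k.2.2 - j.2.2) := by
    simp only [Prod.fst_sub, Prod.snd_sub]
    constructor <;>
      exact fun h => ⟨dvd_sub_comm.mp h.1, dvd_sub_comm.mp h.2.1, dvd_sub_comm.mp h.2.2⟩
  rw [if_congr hiff rfl rfl]
  split_ifs
  · rw [mul_one]
  · rw [mul_zero]

theorem symmetric_trig_interpolation_3d (n : ℕ) (hn : 0 < n) (f : ℝ × ℝ × ℝ → ℂ)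
    (j : ℤ × ℤ × ℤ) (hj : j ∈ X3star n) :
    (|j.1| < (n : ℤ) ∧ |j.2.1| < (n : ℤ) ∧ |j.2.2| < (n : ℤ) →
      Istar3 n f (pt3 n j) = f (pt3 n j)) ∧
    (¬ (|j.1| < (n : ℤ) ∧ |j.2.1| < (n : ℤ) ∧ |j.2.2| < (n : ℤ)) →
      Istar3 n f (pt3 n j)
        = ∑ k ∈ (X3star n).filter (fun k => (2 * (n : ℤ)) ∣ k.1 - j.1 ∧
            (2 * (n : ℤ)) ∣ k.2.1 - j.2.1 ∧ (2 * (n : ℤ)) ∣ k.2.2 - j.2.2),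
          f (pt3 n k)) := by
  refine ⟨fun hint => ?_, fun _ => Istar_eval n hn f j hj⟩
  rw [Istar_eval n hn f j hj]
  have hfil : (X3star n).filter (fun k => (2 * (n : ℤ)) ∣ k.1 - j.1 ∧
      (2 * (n : ℤ)) ∣ k.2.1 - j.2.1 ∧ (2 * (n : ℤ)) ∣ k.2.2 - j.2.2) = {j} := by
    apply Finset.eq_singleton_iff_unique_mem.2
    constructor
    · exact Finset.mem_filter.2 ⟨hj, by simp⟩
    · intro k hk
      obtain ⟨hkX, hd1, hd2, hd3⟩ := Finset.mem_filter.1 hk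
      obtain ⟨⟨hb1, hb2⟩, ⟨hb3, hb4⟩, ⟨hb5, hb6⟩, _, _⟩ := mem_X3star.1 hkX
      obtain ⟨hj1, hj2, hj3⟩ := hint
      rw [abs_lt] at hj1 hj2 hj3
      have e1 : k.1 - j.1 = 0 := by
        refine Int.eq_zero_of_abs_lt_dvd hd1 (abs_sub_lt_iff.2 ⟨by omega, by omega⟩)
      have e2 : k.2.1 - j.2.1 = 0 :=
        Int.eq_zero_of_abs_lt_dvd hd2 (abs_sub_lt_iff.2 ⟨by omega, by omega⟩)
      have e3 : k.2.2 - j.2.2 = 0 :=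
        Int.eq_zero_of_abs_lt_dvd hd3 (abs_sub_lt_iff.2 ⟨by omega, by omega⟩)
      have : k.1 = j.1 ∧ k.2.1 = j.2.1 ∧ k.2.2 = j.2.2 := by omega
      exact Prod.ext this.1 (Prod.ext this.2.1 this.2.2)
  rw [hfil, Finset.sum_singleton]
end

section
/- Let n be a positive integer. For k ∈ Ξ_n define ℓ_k(x) := λ_k · (1/8) · Σ_{(ε₁,ε₂,ε₃) ∈ {−1,1}³} Φ_n^*(ε₁x₁ − k₁/(2n), ε₂x₂ − k₂/(2n), ε₃x₃ − k₃/(2n)). Then for every function f : ℝ³ → ℂ and every j ∈ Ξ_n, Σ_{k ∈ Ξ_n} f(k/(2n)) · ℓ_k(j/(2n)) = f(j/(2n)); equivalently, ℓ_k(j/(2n)) = δ_{k,j} for all j, k ∈ Ξ_n. -/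
open MeasureTheory Complex

attribute [local instance] Classical.propDecidable

/-- Ξ_n = {k : 0 ≤ k_i ≤ n, k1 ≡ k2 ≡ k3 (mod 2)}. -/
noncomputable def Xi3 (n : ℕ) : Finset (ℤ × ℤ × ℤ) :=
  (Finset.Icc ((0 : ℤ), (0 : ℤ), (0 : ℤ)) ((n : ℤ), (n : ℤ), (n : ℤ))).filter
    fun k => k.1 % 2 = k.2.1 % 2 ∧ k.2.1 % 2 = k.2.2 % 2

/-- The cubature weight λ_k = 2^{3-m}, m = #{i : k_i ∈ {0, n}}. -/
noncomputable def lam3 (n : ℕ) (k : ℤ × ℤ × ℤ) : ℝ :=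
  2 ^ (3 - ((if k.1 = 0 ∨ k.1 = (n : ℤ) then 1 else 0)
    + (if k.2.1 = 0 ∨ k.2.1 = (n : ℤ) then 1 else 0)
    + (if k.2.2 = 0 ∨ k.2.2 = (n : ℤ) then 1 else 0) : ℕ))

/-- The fundamental interpolation function ℓ_k. -/
noncomputable def ell3 (n : ℕ) (k : ℤ × ℤ × ℤ) (x : ℝ × ℝ × ℝ) : ℂ :=
  (lam3 n k : ℂ) * (1 / 8) *
    ∑ ε ∈ (({-1, 1} : Finset ℤ) ×ˢ (({-1, 1} : Finset ℤ) ×ˢ ({-1, 1} : Finset ℤ))),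
      Phi3star n ((ε.1 : ℝ) * x.1 - (k.1 : ℝ) / (2 * n),
        (ε.2.1 : ℝ) * x.2.1 - (k.2.1 : ℝ) / (2 * n),
        (ε.2.2 : ℝ) * x.2.2 - (k.2.2 : ℝ) / (2 * n))

namespace AIN
open Finset

noncomputable def zeta (n : ℕ) : ℂ := Complex.exp (Real.pi * Complex.I / n)

lemma zeta_ne_zero (n : ℕ) : zeta n ≠ 0 := Complex.exp_ne_zero _

lemma zeta_zpow (n : ℕ) (t : ℤ) :
    zeta n ^ t = Complex.exp (t * (Real.pi * Complex.I / n)) :=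
  (Complex.exp_int_mul _ t).symm

lemma zeta_zpow_eq_one_iff {n : ℕ} (hn : 0 < n) (w : ℤ) :
    zeta n ^ w = 1 ↔ (2 * (n:ℤ)) ∣ w := by
  have hn' : (n:ℂ) ≠ 0 := Nat.cast_ne_zero.mpr hn.ne'
  have hpi : (Real.pi : ℂ) ≠ 0 := Complex.ofReal_ne_zero.mpr Real.pi_ne_zero
  have hc : (Real.pi * Complex.I / n) ≠ 0 :=
    div_ne_zero (mul_ne_zero hpi Complex.I_ne_zero) hn'
  rw [zeta_zpow, Complex.exp_eq_one_iff]
  constructor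
  · rintro ⟨k, hk⟩
    refine ⟨k, ?_⟩
    have h2 : (k : ℂ) * (2 * Real.pi * Complex.I) = ((2 * n * k : ℤ) : ℂ) * (Real.pi * Complex.I / n) := by
      push_cast; field_simp
    rw [h2] at hk
    have := mul_right_cancel₀ hc hk
    exact_mod_cast this
  · rintro ⟨k, rfl⟩
    refine ⟨k, ?_⟩
    push_cast
    field_simp

lemma fcc_refl (n : ℕ) (a : ℤ × ℤ × ℤ) : fccCong n a a :=
  ⟨(0,0,0), ⟨0, by ring⟩, by ring, by ring, by ring⟩

lemma fcc_symm {n : ℕ} {a b : ℤ × ℤ × ℤ} (h : fccCong n a b) : fccCong n b a := by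
  obtain ⟨m, ⟨r, hr⟩, h1, h2, h3⟩ := h
  refine ⟨(-m.1, -m.2.1, -m.2.2), ⟨-r, by dsimp only; omega⟩, ?_, ?_, ?_⟩ <;>
    simp only [mul_neg] <;> linarith

lemma fcc_trans {n : ℕ} {a b c : ℤ × ℤ × ℤ} (h : fccCong n a b) (h' : fccCong n b c) :
    fccCong n a c := by
  obtain ⟨m, ⟨r, hr⟩, h1, h2, h3⟩ := h
  obtain ⟨m', ⟨r', hr'⟩, h1', h2', h3'⟩ := h'
  refine ⟨(m.1 + m'.1, m.2.1 + m'.2.1, m.2.2 + m'.2.2), ⟨r + r', by dsimp only; omega⟩, ?_, ?_, ?_⟩ <;>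
    simp only [mul_add] <;> linarith

noncomputable def Fset (n : ℕ) : Finset (ℤ × ℤ × ℤ) :=
  Finset.Ico (0:ℤ) (((2*n : ℕ) : ℤ)) ×ˢ (Finset.Ico (0:ℤ) (n:ℤ) ×ˢ Finset.Ico (0:ℤ) (n:ℤ))

def red3 (n : ℕ) (x : ℤ × ℤ × ℤ) : ℤ × ℤ × ℤ :=
  ((x.1 - (x.2.1 - x.2.2 + x.2.2 % n) + (x.2.1 - x.2.2 + x.2.2 % n) % n) % (2*n),
   (x.2.1 - x.2.2 + x.2.2 % n) % n,
   x.2.2 % n)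

lemma red3_mem {n : ℕ} (hn : 0 < n) (x : ℤ × ℤ × ℤ) : red3 n x ∈ Fset n := by
  have h1 : (0:ℤ) < (n:ℤ) := by exact_mod_cast hn
  have h2 : (0:ℤ) < 2*(n:ℤ) := by linarith
  simp only [Fset, red3, Finset.mem_product, Finset.mem_Ico]
  push_cast
  refine ⟨⟨Int.emod_nonneg _ (by linarith), ?_⟩, ⟨Int.emod_nonneg _ h1.ne', Int.emod_lt_of_pos _ h1⟩,
    Int.emod_nonneg _ h1.ne', Int.emod_lt_of_pos _ h1⟩
  exact Int.emod_lt_of_pos _ h2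

lemma red3_cong {n : ℕ} (hn : 0 < n) (x : ℤ × ℤ × ℤ) : fccCong n x (red3 n x) := by
  set y2 : ℤ := x.2.1 - x.2.2 + x.2.2 % n with hy2
  set z1 : ℤ := x.1 - y2 + y2 % n with hz1
  set q3 : ℤ := x.2.2 / n
  set q2 : ℤ := y2 / n
  set q1 : ℤ := z1 / (2*n)
  have e3 : (n:ℤ) * q3 + x.2.2 % n = x.2.2 := Int.mul_ediv_add_emod _ _
  have e2 : (n:ℤ) * q2 + y2 % n = y2 := Int.mul_ediv_add_emod _ _
  have e1 : (2*(n:ℤ)) * q1 + z1 % (2*n) = z1 := Int.mul_ediv_add_emod _ _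
  refine ⟨(q2 + 2*q1, q3 + q2, q3), ⟨q1 + q2 + q3, by ring⟩, ?_, ?_, ?_⟩
  · show x.1 - z1 % (2*↑n) = (n:ℤ) * (q2 + 2*q1)
    linear_combination -e1 - e2 - hz1
  · show x.2.1 - y2 % ↑n = (n:ℤ) * (q3 + q2)
    linear_combination -e2 - e3 - hy2
  · show x.2.2 - x.2.2 % ↑n = (n:ℤ) * q3
    linear_combination -e3

lemma int_unit {n : ℤ} (hn : 0 < n) {c t : ℤ} (h : t = n * c) (hlo : -n < t) (hhi : t < n) :
    c = 0 := by
  rcases lt_trichotomy c 0 with hc | hc | hc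
  · nlinarith
  · exact hc
  · nlinarith

lemma fcc_eq_of_mem_F {n : ℕ} (hn : 0 < n) {a b : ℤ × ℤ × ℤ}
    (ha : a ∈ Fset n) (hb : b ∈ Fset n) (h : fccCong n a b) : a = b := by
  have hnz : (0:ℤ) < (n:ℤ) := by exact_mod_cast hn
  obtain ⟨m, ⟨r, hr⟩, h1, h2, h3⟩ := h
  simp only [Fset, Finset.mem_product, Finset.mem_Ico] at ha hb
  push_cast at ha hb
  obtain ⟨⟨ha1, ha1'⟩, ⟨ha2, ha2'⟩, ha3, ha3'⟩ := ha
  obtain ⟨⟨hb1, hb1'⟩, ⟨hb2, hb2'⟩, hb3, hb3'⟩ := hb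
  have hm3 : m.2.2 = 0 := int_unit hnz h3 (by linarith) (by linarith)
  have hm2 : m.2.1 = 0 := int_unit hnz h2 (by linarith) (by linarith)
  have hm1 : m.1 = 0 := by
    have hr' : m.1 = 2 * r := by omega
    have h1' : a.1 - b.1 = (2*(n:ℤ)) * r := by rw [h1, hr']; ring
    have : r = 0 := int_unit (by linarith : (0:ℤ) < 2*(n:ℤ)) h1' (by linarith) (by linarith)
    omega
  simp only [hm1, hm2, hm3, mul_zero] at h1 h2 h3
  simp only [Prod.ext_iff]
  omega
lemma mem_Lam_iff (n : ℕ) (x : ℤ × ℤ × ℤ) :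
    x ∈ LamDagStar n ↔
      |x.1 + x.2.1| ≤ (n:ℤ) ∧ |x.1 - x.2.1| ≤ (n:ℤ) ∧ |x.1 + x.2.2| ≤ (n:ℤ) ∧
      |x.1 - x.2.2| ≤ (n:ℤ) ∧ |x.2.1 + x.2.2| ≤ (n:ℤ) ∧ |x.2.1 - x.2.2| ≤ (n:ℤ) := by
  simp only [LamDagStar, box3, Finset.mem_filter, Finset.mem_Icc, Prod.le_def, abs_le]
  omega

lemma step_lemma {n : ℕ} (hn : 0 < n) (x v : ℤ × ℤ × ℤ)
    (hv : Even (v.1 + v.2.1 + v.2.2)) (hnorm : v.1^2 + v.2.1^2 + v.2.2^2 = 2)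
    (hdot : (n:ℤ) < x.1 * v.1 + x.2.1 * v.2.1 + x.2.2 * v.2.2) :
    fccCong n (x.1 - n*v.1, x.2.1 - n*v.2.1, x.2.2 - n*v.2.2) x ∧
    (x.1 - n*v.1)^2 + (x.2.1 - n*v.2.1)^2 + (x.2.2 - n*v.2.2)^2
      < x.1^2 + x.2.1^2 + x.2.2^2 := by
  have hnz : (0:ℤ) < (n:ℤ) := by exact_mod_cast hn
  obtain ⟨r, hr⟩ := hv
  constructor
  · exact ⟨(-v.1, -v.2.1, -v.2.2), ⟨-r, by dsimp only; omega⟩, by dsimp only; ring,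
      by dsimp only; ring, by dsimp only; ring⟩
  · nlinarith [mul_lt_mul_of_pos_left hdot hnz]

lemma descend {n : ℕ} (hn : 0 < n) (x : ℤ × ℤ × ℤ) (hx : x ∉ LamDagStar n) :
    ∃ x' : ℤ × ℤ × ℤ, fccCong n x' x ∧
      x'.1^2 + x'.2.1^2 + x'.2.2^2 < x.1^2 + x.2.1^2 + x.2.2^2 := by
  have key : ∀ v : ℤ × ℤ × ℤ, Even (v.1 + v.2.1 + v.2.2) → v.1^2 + v.2.1^2 + v.2.2^2 = 2 →
      (n:ℤ) < x.1 * v.1 + x.2.1 * v.2.1 + x.2.2 * v.2.2 →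
      ∃ x' : ℤ × ℤ × ℤ, fccCong n x' x ∧
        x'.1^2 + x'.2.1^2 + x'.2.2^2 < x.1^2 + x.2.1^2 + x.2.2^2 := by
    intro v hv h2 hd
    obtain ⟨hc, hlt⟩ := step_lemma hn x v hv h2 hd
    exact ⟨_, hc, hlt⟩
  rw [mem_Lam_iff] at hx
  by_cases c1 : |x.1 + x.2.1| ≤ (n:ℤ)
  · by_cases c2 : |x.1 - x.2.1| ≤ (n:ℤ)
    · by_cases c3 : |x.1 + x.2.2| ≤ (n:ℤ)
      · by_cases c4 : |x.1 - x.2.2| ≤ (n:ℤ)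
        · by_cases c5 : |x.2.1 + x.2.2| ≤ (n:ℤ)
          · by_cases c6 : |x.2.1 - x.2.2| ≤ (n:ℤ)
            · exact absurd ⟨c1, c2, c3, c4, c5, c6⟩ hx
            · rcases lt_abs.mp (not_le.mp c6) with h | h
              · exact key (0, 1, -1) ⟨0, by ring⟩ (by ring) (by dsimp only; nlinarith)
              · exact key (0, -1, 1) ⟨0, by ring⟩ (by ring) (by dsimp only; nlinarith)
          · rcases lt_abs.mp (not_le.mp c5) with h | h
            · exact key (0, 1, 1) ⟨1, by ring⟩ (by ring) (by dsimp only; nlinarith)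
            · exact key (0, -1, -1) ⟨-1, by ring⟩ (by ring) (by dsimp only; nlinarith)
        · rcases lt_abs.mp (not_le.mp c4) with h | h
          · exact key (1, 0, -1) ⟨0, by ring⟩ (by ring) (by dsimp only; nlinarith)
          · exact key (-1, 0, 1) ⟨0, by ring⟩ (by ring) (by dsimp only; nlinarith)
      · rcases lt_abs.mp (not_le.mp c3) with h | h
        · exact key (1, 0, 1) ⟨1, by ring⟩ (by ring) (by dsimp only; nlinarith)
        · exact key (-1, 0, -1) ⟨-1, by ring⟩ (by ring) (by dsimp only; nlinarith)
    · rcases lt_abs.mp (not_le.mp c2) with h | h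
      · exact key (1, -1, 0) ⟨0, by ring⟩ (by ring) (by dsimp only; nlinarith)
      · exact key (-1, 1, 0) ⟨0, by ring⟩ (by ring) (by dsimp only; nlinarith)
  · rcases lt_abs.mp (not_le.mp c1) with h | h
    · exact key (1, 1, 0) ⟨1, by ring⟩ (by ring) (by dsimp only; nlinarith)
    · exact key (-1, -1, 0) ⟨-1, by ring⟩ (by ring) (by dsimp only; nlinarith)

lemma exists_rep {n : ℕ} (hn : 0 < n) (x : ℤ × ℤ × ℤ) :
    ∃ ν ∈ LamDagStar n, fccCong n ν x := by
  suffices H : ∀ N : ℕ, ∀ x : ℤ × ℤ × ℤ, (x.1^2 + x.2.1^2 + x.2.2^2).toNat < N →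
      ∃ ν ∈ LamDagStar n, fccCong n ν x by
    exact H ((x.1^2 + x.2.1^2 + x.2.2^2).toNat + 1) x (Nat.lt_succ_self _)
  intro N
  induction N with
  | zero => intro x hx; omega
  | succ N ih =>
    intro x hx
    by_cases hmem : x ∈ LamDagStar n
    · exact ⟨x, hmem, fcc_refl n x⟩
    · obtain ⟨x', hc, hlt⟩ := descend hn x hmem
      have hnn : (0:ℤ) ≤ x'.1^2 + x'.2.1^2 + x'.2.2^2 := by positivity
      obtain ⟨ν, h1, h2⟩ := ih x' (by omega)
      exact ⟨ν, h1, fcc_trans h2 hc⟩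
noncomputable def dot3 (a b : ℤ × ℤ × ℤ) : ℤ := a.1*b.1 + a.2.1*b.2.1 + a.2.2*b.2.2

lemma sum_lam_eq_sum_F {n : ℕ} (hn : 0 < n) (χ : ℤ × ℤ × ℤ → ℂ)
    (hχ : ∀ a b, fccCong n a b → χ a = χ b) :
    ∑ ν ∈ LamDagStar n, (mu3 n ν : ℂ) * χ ν = ∑ f ∈ Fset n, χ f := by
  rw [← Finset.sum_fiberwise_of_maps_to (g := red3 n) (fun x _ => red3_mem hn x)
    (fun ν => (mu3 n ν : ℂ) * χ ν)]
  apply Finset.sum_congr rfl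
  intro f hf
  have hfix : ∀ ν ∈ LamDagStar n, (red3 n ν = f ↔ fccCong n ν f) := by
    intro ν _
    constructor
    · intro h; exact h ▸ red3_cong hn ν
    · intro h
      exact fcc_eq_of_mem_F hn (red3_mem hn ν) hf (fcc_trans (fcc_symm (red3_cong hn ν)) h)
  have hfilter : (LamDagStar n).filter (fun ν => red3 n ν = f)
      = (LamDagStar n).filter (fun ν => fccCong n ν f) := by
    exact Finset.filter_congr hfix
  rw [hfilter]
  set s := (LamDagStar n).filter (fun ν => fccCong n ν f) with hs
  obtain ⟨ν0, hν0, hc0⟩ := exists_rep hn f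
  have hcard : 0 < s.card := Finset.card_pos.mpr ⟨ν0, Finset.mem_filter.mpr ⟨hν0, hc0⟩⟩
  have hmu : ∀ ν ∈ s, (mu3 n ν : ℂ) = 1 / (s.card : ℂ) := by
    intro ν hν
    rw [Finset.mem_filter] at hν
    have hset : (LamDagStar n).filter (fun μ' => fccCong n μ' ν) = s := by
      rw [hs]
      exact Finset.filter_congr fun μ' _ =>
        ⟨fun h => fcc_trans h hν.2, fun h => fcc_trans h (fcc_symm hν.2)⟩
    rw [mu3, hset]
    push_cast
    ring
  have hval : ∀ ν ∈ s, (mu3 n ν : ℂ) * χ ν = 1 / (s.card : ℂ) * χ f := by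
    intro ν hν
    rw [hmu ν hν, hχ ν f (Finset.mem_filter.mp hν).2]
  rw [Finset.sum_congr rfl hval, Finset.sum_const, nsmul_eq_mul]
  have : (s.card : ℂ) ≠ 0 := Nat.cast_ne_zero.mpr hcard.ne'
  field_simp

lemma Gsum {n : ℕ} (hn : 0 < n) (N : ℕ) (w : ℤ) (hNw : (2*(n:ℤ)) ∣ (N:ℤ) * w) :
    ∑ i ∈ Finset.range N, zeta n ^ ((i:ℤ)*w) = if (2*(n:ℤ)) ∣ w then (N:ℂ) else 0 := by
  split
  · next h =>
    rw [Finset.sum_congr rfl (fun i _ => (zeta_zpow_eq_one_iff hn _).mpr (h.mul_left _))]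
    simp
  · next h =>
    have hr : zeta n ^ w ≠ 1 := fun hc => h ((zeta_zpow_eq_one_iff hn w).mp hc)
    have hconv : ∀ i ∈ Finset.range N, zeta n ^ ((i:ℤ)*w) = (zeta n ^ w) ^ i := by
      intro i _
      rw [mul_comm, zpow_mul, ← zpow_natCast]
    rw [Finset.sum_congr rfl hconv, geom_sum_eq hr]
    have hend : (zeta n ^ w) ^ N = 1 := by
      rw [← zpow_natCast, ← zpow_mul, zeta_zpow_eq_one_iff hn]
      rwa [mul_comm w]
    rw [hend]
    simp

lemma sum_Ico_int (N : ℕ) (f : ℤ → ℂ) :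
    ∑ a ∈ Finset.Ico (0:ℤ) ((N:ℕ):ℤ), f a = ∑ i ∈ Finset.range N, f i := by
  induction N with
  | zero => simp
  | succ N ih =>
    have hins : Finset.Ico (0:ℤ) (((N+1:ℕ):ℕ):ℤ) = insert ((N:ℕ):ℤ) (Finset.Ico 0 ((N:ℕ):ℤ)) := by
      ext a
      simp only [Finset.mem_Ico, Finset.mem_insert]
      push_cast
      omega
    rw [hins, Finset.sum_insert (by simp [Finset.mem_Ico]), ih, Finset.sum_range_succ, add_comm]
lemma e3_eq_zeta {n : ℕ} (hn : 0 < n) (ν m : ℤ × ℤ × ℤ) :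
    e3 ν (pt3 n m) = zeta n ^ (dot3 ν m) := by
  rw [e3, pt3, zeta_zpow, dot3]
  congr 1
  have hn' : (n:ℂ) ≠ 0 := Nat.cast_ne_zero.mpr hn.ne'
  push_cast
  field_simp

lemma zpow_cong {n : ℕ} (hn : 0 < n) {s t u : ℤ} (h : s = t + (2*(n:ℤ)) * u) :
    zeta n ^ s = zeta n ^ t := by
  rw [h, zpow_add₀ (zeta_ne_zero n), zpow_mul, (zeta_zpow_eq_one_iff hn _).mpr dvd_rfl,
    one_zpow, mul_one]

lemma Phi_at_node {n : ℕ} (hn : 0 < n) (m : ℤ × ℤ × ℤ)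
    (hpar : m.1 % 2 = m.2.1 % 2 ∧ m.2.1 % 2 = m.2.2 % 2) :
    Phi3star n (pt3 n m) =
      if (2*(n:ℤ)) ∣ m.1 ∧ (2*(n:ℤ)) ∣ m.2.1 ∧ (2*(n:ℤ)) ∣ m.2.2 then 1 else 0 := by
  obtain ⟨s, hs⟩ : ∃ s, m.2.1 = m.1 + 2*s := ⟨(m.2.1 - m.1)/2, by omega⟩
  obtain ⟨t, ht⟩ : ∃ t, m.2.2 = m.1 + 2*t := ⟨(m.2.2 - m.1)/2, by omega⟩
  have hχ : ∀ a b, fccCong n a b → zeta n ^ (dot3 a m) = zeta n ^ (dot3 b m) := by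
    rintro a b ⟨p, ⟨r, hr⟩, h1, h2, h3⟩
    apply zpow_cong hn (u := m.1*r + s*p.2.1 + t*p.2.2)
    rw [dot3, dot3]
    linear_combination m.1*h1 + m.2.1*h2 + m.2.2*h3 + ((n:ℤ)*p.2.1)*hs + ((n:ℤ)*p.2.2)*ht
      + ((n:ℤ)*m.1)*hr
  have hrw : ∑ ν ∈ LamDagStar n, (mu3 n ν : ℂ) * e3 ν (pt3 n m)
      = ∑ f ∈ Fset n, zeta n ^ (dot3 f m) := by
    rw [Finset.sum_congr rfl (fun ν _ => by rw [e3_eq_zeta hn ν m])]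
    exact sum_lam_eq_sum_F hn _ hχ
  rw [Phi3star, hrw]
  have hsplit : ∑ f ∈ Fset n, zeta n ^ (dot3 f m)
      = (∑ a ∈ Finset.Ico (0:ℤ) (((2*n:ℕ):ℤ)), zeta n ^ (a * m.1))
        * ((∑ b ∈ Finset.Ico (0:ℤ) (((n:ℕ):ℤ)), zeta n ^ (b * m.2.1))
          * (∑ c ∈ Finset.Ico (0:ℤ) (((n:ℕ):ℤ)), zeta n ^ (c * m.2.2))) := by
    have step1 : ∑ f ∈ Fset n, zeta n ^ (dot3 f m)
        = ∑ a ∈ Finset.Ico (0:ℤ) (((2*n:ℕ):ℤ)), ∑ b ∈ Finset.Ico (0:ℤ) (((n:ℕ):ℤ)),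
            ∑ c ∈ Finset.Ico (0:ℤ) (((n:ℕ):ℤ)),
            zeta n ^ (a * m.1) * (zeta n ^ (b * m.2.1) * zeta n ^ (c * m.2.2)) := by
      rw [Fset, Finset.sum_product]
      refine Finset.sum_congr rfl fun a _ => ?_
      rw [Finset.sum_product]
      refine Finset.sum_congr rfl fun b _ => Finset.sum_congr rfl fun c _ => ?_
      rw [dot3, ← zpow_add₀ (zeta_ne_zero n), ← zpow_add₀ (zeta_ne_zero n)]
      congr 1
      dsimp only
      ring
    rw [step1]
    simp_rw [← Finset.mul_sum, ← Finset.sum_mul]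
  rw [hsplit, sum_Ico_int, sum_Ico_int, sum_Ico_int]
  rw [Gsum hn (2*n) m.1 (by push_cast; exact ⟨m.1, by ring⟩)]
  by_cases d1 : (2*(n:ℤ)) ∣ m.1
  · have hm1even : (2:ℤ) ∣ m.1 := dvd_trans ⟨(n:ℤ), rfl⟩ d1
    obtain ⟨u, hu⟩ := hm1even
    have h2 : (2*(n:ℤ)) ∣ (n:ℤ) * m.2.1 := ⟨u + s, by rw [hs, hu]; ring⟩
    have h3 : (2*(n:ℤ)) ∣ (n:ℤ) * m.2.2 := ⟨u + t, by rw [ht, hu]; ring⟩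
    rw [Gsum hn n m.2.1 (by push_cast; exact h2), Gsum hn n m.2.2 (by push_cast; exact h3),
      if_pos d1]
    by_cases d2 : (2*(n:ℤ)) ∣ m.2.1
    · by_cases d3 : (2*(n:ℤ)) ∣ m.2.2
      · rw [if_pos d2, if_pos d3, if_pos ⟨d1, d2, d3⟩]
        have hn' : (n:ℂ) ≠ 0 := Nat.cast_ne_zero.mpr hn.ne'
        push_cast
        field_simp
      · have hcon : ¬((2*(n:ℤ)) ∣ m.1 ∧ (2*(n:ℤ)) ∣ m.2.1 ∧ (2*(n:ℤ)) ∣ m.2.2) :=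
          fun hc => d3 hc.2.2
        rw [if_neg d3, if_neg hcon]
        ring
    · have hcon : ¬((2*(n:ℤ)) ∣ m.1 ∧ (2*(n:ℤ)) ∣ m.2.1 ∧ (2*(n:ℤ)) ∣ m.2.2) :=
        fun hc => d2 hc.2.1
      rw [if_neg d2, if_neg hcon]
      ring
  · have hcon : ¬((2*(n:ℤ)) ∣ m.1 ∧ (2*(n:ℤ)) ∣ m.2.1 ∧ (2*(n:ℤ)) ∣ m.2.2) :=
      fun hc => d1 hc.1
    rw [if_neg d1, if_neg hcon]
    ring
lemma coord_sum {n : ℕ} (hn : 0 < n) {a b : ℤ} (ha : 0 ≤ a ∧ a ≤ (n:ℤ)) (hb : 0 ≤ b ∧ b ≤ (n:ℤ)) :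
    ∑ e ∈ ({-1, 1} : Finset ℤ), (if (2*(n:ℤ)) ∣ (e*a - b) then (1:ℂ) else 0)
      = if b = a then (if a = 0 ∨ a = (n:ℤ) then 2 else 1) else 0 := by
  have hnz : (0:ℤ) < (n:ℤ) := by exact_mod_cast hn
  rw [Finset.sum_pair (by decide : (-1:ℤ) ≠ 1)]
  have h1 : (2*(n:ℤ)) ∣ ((-1)*a - b) ↔ (b = a ∧ (a = 0 ∨ a = (n:ℤ))) := by
    constructor
    · rintro ⟨c, hc⟩
      have hc1 : -1 ≤ c := by nlinarith
      have hc2 : c ≤ 0 := by nlinarith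
      have : c = -1 ∨ c = 0 := by omega
      rcases this with rfl | rfl <;> omega
    · rintro ⟨rfl, (rfl | h)⟩
      · exact ⟨0, by ring⟩
      · exact ⟨-1, by omega⟩
  have h2 : (2*(n:ℤ)) ∣ (1*a - b) ↔ b = a := by
    constructor
    · rintro ⟨c, hc⟩
      have hc1 : -1 < c := by nlinarith
      have hc2 : c < 1 := by nlinarith
      have : c = 0 := by omega
      subst this
      omega
    · rintro rfl
      exact ⟨0, by ring⟩
  rw [if_congr h1 rfl rfl, if_congr h2 rfl rfl]
  by_cases hba : b = a
  · by_cases hbd : a = 0 ∨ a = (n:ℤ) <;> simp [hba, hbd] <;> norm_num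
  · simp [hba]

lemma ite_and_three (A B C : Prop) :
    (if A ∧ B ∧ C then (1:ℂ) else 0)
      = (if A then (1:ℂ) else 0) * ((if B then (1:ℂ) else 0) * (if C then (1:ℂ) else 0)) := by
  by_cases hA : A <;> by_cases hB : B <;> by_cases hC : C <;> simp [hA, hB, hC]

lemma sign_parity (e a b : ℤ) (he : e = -1 ∨ e = 1) : (e*a - b) % 2 = (a + b) % 2 := by
  rcases he with rfl | rfl <;> omega

lemma ell_delta {n : ℕ} (hn : 0 < n) {j k : ℤ × ℤ × ℤ} (hj : j ∈ Xi3 n) (hk : k ∈ Xi3 n) :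
    ell3 n k (pt3 n j) = if k = j then 1 else 0 := by
  simp only [Xi3, Finset.mem_filter, Finset.mem_Icc, Prod.le_def] at hj hk
  obtain ⟨⟨⟨hj1, hj2, hj3⟩, hj1', hj2', hj3'⟩, hjp1, hjp2⟩ := hj
  obtain ⟨⟨⟨hk1, hk2, hk3⟩, hk1', hk2', hk3'⟩, hkp1, hkp2⟩ := hk
  rw [ell3]
  have hterm : ∀ ε ∈ (({-1, 1} : Finset ℤ) ×ˢ (({-1, 1} : Finset ℤ) ×ˢ ({-1, 1} : Finset ℤ))),
      Phi3star n ((ε.1 : ℝ) * (pt3 n j).1 - (k.1 : ℝ) / (2 * n),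
        (ε.2.1 : ℝ) * (pt3 n j).2.1 - (k.2.1 : ℝ) / (2 * n),
        (ε.2.2 : ℝ) * (pt3 n j).2.2 - (k.2.2 : ℝ) / (2 * n))
      = (if (2*(n:ℤ)) ∣ (ε.1*j.1 - k.1) then (1:ℂ) else 0)
        * ((if (2*(n:ℤ)) ∣ (ε.2.1*j.2.1 - k.2.1) then (1:ℂ) else 0)
          * (if (2*(n:ℤ)) ∣ (ε.2.2*j.2.2 - k.2.2) then (1:ℂ) else 0)) := by
    intro ε hε
    simp only [Finset.mem_product, Finset.mem_insert, Finset.mem_singleton] at hε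
    obtain ⟨he1, he2, he3⟩ := hε
    have harg : ((ε.1 : ℝ) * (pt3 n j).1 - (k.1 : ℝ) / (2 * n),
        (ε.2.1 : ℝ) * (pt3 n j).2.1 - (k.2.1 : ℝ) / (2 * n),
        (ε.2.2 : ℝ) * (pt3 n j).2.2 - (k.2.2 : ℝ) / (2 * n))
        = pt3 n (ε.1*j.1 - k.1, ε.2.1*j.2.1 - k.2.1, ε.2.2*j.2.2 - k.2.2) := by
      simp only [pt3, Prod.ext_iff]
      refine ⟨?_, ?_, ?_⟩ <;> push_cast <;> ring
    rw [harg, Phi_at_node hn _ ⟨by dsimp only; rw [sign_parity _ _ _ he1, sign_parity _ _ _ he2]; omega,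
      by dsimp only; rw [sign_parity _ _ _ he2, sign_parity _ _ _ he3]; omega⟩]
    dsimp only
    by_cases hA : (2*(n:ℤ)) ∣ (ε.1*j.1 - k.1) <;>
      by_cases hB : (2*(n:ℤ)) ∣ (ε.2.1*j.2.1 - k.2.1) <;>
        by_cases hC : (2*(n:ℤ)) ∣ (ε.2.2*j.2.2 - k.2.2) <;>
          simp [hA, hB, hC]
  rw [Finset.sum_congr rfl hterm]
  have hsplit : ∑ ε ∈ (({-1, 1} : Finset ℤ) ×ˢ (({-1, 1} : Finset ℤ) ×ˢ ({-1, 1} : Finset ℤ))),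
      ((if (2*(n:ℤ)) ∣ (ε.1*j.1 - k.1) then (1:ℂ) else 0)
        * ((if (2*(n:ℤ)) ∣ (ε.2.1*j.2.1 - k.2.1) then (1:ℂ) else 0)
          * (if (2*(n:ℤ)) ∣ (ε.2.2*j.2.2 - k.2.2) then (1:ℂ) else 0)))
      = (∑ e ∈ ({-1, 1} : Finset ℤ), if (2*(n:ℤ)) ∣ (e*j.1 - k.1) then (1:ℂ) else 0)
        * ((∑ e ∈ ({-1, 1} : Finset ℤ), if (2*(n:ℤ)) ∣ (e*j.2.1 - k.2.1) then (1:ℂ) else 0)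
          * (∑ e ∈ ({-1, 1} : Finset ℤ), if (2*(n:ℤ)) ∣ (e*j.2.2 - k.2.2) then (1:ℂ) else 0)) := by
    rw [Finset.sum_product]
    dsimp only
    simp_rw [Finset.sum_product]
    rw [Finset.sum_mul_sum, Finset.sum_mul_sum]
    simp only [Finset.mul_sum]
  rw [hsplit, coord_sum hn ⟨hj1, hj1'⟩ ⟨hk1, hk1'⟩, coord_sum hn ⟨hj2, hj2'⟩ ⟨hk2, hk2'⟩,
    coord_sum hn ⟨hj3, hj3'⟩ ⟨hk3, hk3'⟩]
  by_cases hkj : k = j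
  · subst hkj
    rw [if_pos rfl, if_pos rfl, if_pos rfl, if_pos rfl]
    by_cases b1 : k.1 = 0 ∨ k.1 = (n:ℤ) <;>
      by_cases b2 : k.2.1 = 0 ∨ k.2.1 = (n:ℤ) <;>
        by_cases b3 : k.2.2 = 0 ∨ k.2.2 = (n:ℤ) <;>
          simp [lam3, b1, b2, b3] <;> norm_num
  · rw [if_neg hkj]
    have : k.1 ≠ j.1 ∨ k.2.1 ≠ j.2.1 ∨ k.2.2 ≠ j.2.2 := by
      by_contra hcon
      push_neg at hcon
      exact hkj (by ext <;> tauto)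
    rcases this with hne | hne | hne <;> simp [hne]
end AIN

theorem algebraic_interpolation_nodes_3d (n : ℕ) (hn : 0 < n) :
    (∀ f : ℝ × ℝ × ℝ → ℂ, ∀ j ∈ Xi3 n,
      ∑ k ∈ Xi3 n, f (pt3 n k) * ell3 n k (pt3 n j) = f (pt3 n j)) ∧
    (∀ j ∈ Xi3 n, ∀ k ∈ Xi3 n, ell3 n k (pt3 n j) = if k = j then 1 else 0) := by
  have hdelta : ∀ j ∈ Xi3 n, ∀ k ∈ Xi3 n, ell3 n k (pt3 n j) = if k = j then 1 else 0 :=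
    fun j hj k hk => AIN.ell_delta hn hj hk
  refine ⟨?_, hdelta⟩
  intro f j hj
  rw [Finset.sum_congr rfl (fun k hk => by rw [hdelta j hj k hk])]
  simp only [mul_ite, mul_one, mul_zero]
  rw [Finset.sum_ite_eq' (Xi3 n) j (fun k => f (pt3 n k)), if_pos hj]
end
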